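/- arXiv:2205.12826 — 4 statements merged into one kernel-verified Lean document; each statement's English description precedes it below -/
import Mathlib

section
/- For every r, t ∈ ℕ, there exists a constant C = C(r,t) > 0 and n₀ ∈ ℕ such that for every n ≥ n₀, every r-colouring of the edges of the complete graph K_n in which every one of the r colours appears on at least C·n^{2−1/t} edges contains an (r,t)-unavoidable graph, i.e. contains as an edge-coloured subgraph a member of the family 𝓕ʳₜ. -/
set_option maxRecDepth 8000

/-- A vertex- and edge-coloured complete graph on `Fin v` with `r` colours is
modelled as a function `χ : Sym2 (Fin v) → Fin r`, where `χ s(a, a)` is the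
colour of the vertex `a` and `χ s(a, b)` (for `a ≠ b`) the colour of the edge
`ab`. It is `r`-minimal if all `r` colours are present and no proper induced
coloured subgraph contains all `r` colours. -/
def IsRMinimal (r v : ℕ) (χ : Sym2 (Fin v) → Fin r) : Prop :=
  (∀ k : Fin r, ∃ a b : Fin v, χ s(a, b) = k) ∧
    ∀ S : Finset (Fin v), S ≠ Finset.univ →
      ∃ k : Fin r, ∀ a ∈ S, ∀ b ∈ S, χ s(a, b) ≠ k

/-- `ContainsUnavoidable r t n c` : the `r`-edge-coloured complete graph on
`Fin n` with colouring `c` contains a member of `𝓕ʳₜ`, i.e. an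
`(r,t)`-unavoidable graph: there is an `r`-minimal graph `χ` on `Fin v` and an
injection of its `t`-blowup (on vertex set `Fin v × Fin t`) into `Fin n` on
which `c` agrees with the blowup colouring (edges inside the clique replacing
a vertex `a` get the vertex colour `χ s(a, a)`, and edges between the cliques
replacing `a ≠ b` get the edge colour `χ s(a, b)`). -/
def ContainsUnavoidable (r t n : ℕ) (c : Sym2 (Fin n) → Fin r) : Prop :=
  ∃ (v : ℕ) (χ : Sym2 (Fin v) → Fin r) (e : Fin v × Fin t → Fin n),
    IsRMinimal r v χ ∧ Function.Injective e ∧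
      ∀ a b : Fin v × Fin t, a ≠ b → c s(e a, e b) = χ s(a.1, b.1)

open Finset



/-- Pigeonhole: a big fiber. -/
lemma fiber_ge {α β : Type*} [DecidableEq β] [Fintype β] [Nonempty β]
    (S : Finset α) (h : α → β) (m : ℕ) (hS : Fintype.card β * m ≤ S.card) :
    ∃ b : β, m ≤ (S.filter (fun x => h x = b)).card := by
  obtain ⟨y, -, hy⟩ := Finset.exists_le_card_fiber_of_mul_le_card_of_maps_to
    (f := h) (s := S) (t := Finset.univ) (fun a _ => mem_univ _) univ_nonempty
    (by simpa using hS)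
  exact ⟨y, hy⟩

/-- Multicolour Ramsey for pairs (ordered-position version), vector form. -/
lemma ramsey_vec {β : Type} [Fintype β] [DecidableEq β] [Nonempty β] :
    ∀ (N : ℕ) (q : β → ℕ), (∑ k, q k) = N →
    ∃ R : ℕ, 1 ≤ R ∧ ∀ (n : ℕ) (f : Fin n → Fin n → β) (V : Finset (Fin n)),
      R ≤ V.card → ∃ (k : β) (W : Finset (Fin n)), W ⊆ V ∧ q k ≤ W.card ∧
        ∀ p ∈ W, ∀ r ∈ W, p < r → f p r = k := by
  intro N
  induction N using Nat.strong_induction_on with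
  | _ N IH =>
    intro q hq
    by_cases h0 : ∃ k, q k = 0
    · obtain ⟨k, hk⟩ := h0
      exact ⟨1, le_refl 1, fun n f V _ => ⟨k, ∅, empty_subset _, by simp [hk], by simp⟩⟩
    · push_neg at h0
      have hpos : ∀ k, 1 ≤ q k := fun k => Nat.pos_of_ne_zero (h0 k)
      have IH' : ∀ k : β, ∃ R : ℕ, 1 ≤ R ∧ ∀ (n : ℕ) (f : Fin n → Fin n → β) (V : Finset (Fin n)),
          R ≤ V.card → ∃ (k' : β) (W : Finset (Fin n)), W ⊆ V ∧
            (Function.update q k (q k - 1)) k' ≤ W.card ∧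
            ∀ p ∈ W, ∀ r ∈ W, p < r → f p r = k' := by
        intro k
        apply IH (∑ k', Function.update q k (q k - 1) k') _ _ rfl
        have hsum : (∑ k', Function.update q k (q k - 1) k') = (q k - 1) + ∑ k' ∈ univ.erase k, q k' := by
          rw [← Finset.add_sum_erase _ _ (mem_univ k), Function.update_self]
          congr 1
          apply Finset.sum_congr rfl
          intro x hx
          rw [Function.update_of_ne (Finset.ne_of_mem_erase hx)]
        have hsum2 : q k + ∑ k' ∈ univ.erase k, q k' = N := by
          rw [Finset.add_sum_erase _ _ (mem_univ k)]; exact hq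
        have := hpos k
        omega
      choose Rf hRf1 hRf using IH'
      refine ⟨1 + ∑ k, Rf k, by omega, fun n f V hV => ?_⟩
      have hVne : V.Nonempty := Finset.card_pos.mp (by omega)
      set x := V.min' hVne with hxdef
      have hxV : x ∈ V := Finset.min'_mem _ _
      set V' := V.erase x with hV'def
      have hV'card : V'.card = V.card - 1 := Finset.card_erase_of_mem hxV
      have hfib : (∑ k, ((V'.filter (fun y => f x y = k)).card)) = V'.card :=
        (Finset.card_eq_sum_card_fiberwise (fun y _ => mem_univ (f x y))).symm
      have hex : ∃ k, Rf k ≤ (V'.filter (fun y => f x y = k)).card := by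
        by_contra hc
        push_neg at hc
        have h1 : (∑ k, ((V'.filter (fun y => f x y = k)).card)) < ∑ k, Rf k :=
          Finset.sum_lt_sum_of_nonempty univ_nonempty (fun k _ => hc k)
        rw [hfib] at h1
        omega
      obtain ⟨k, hk⟩ := hex
      obtain ⟨k', W', hW'sub, hW'card, hW'mono⟩ := hRf k n f _ hk
      have hW'V' : W' ⊆ V' := hW'sub.trans (Finset.filter_subset _ _)
      by_cases hkk : k' = k
      · subst hkk
        refine ⟨k', insert x W', ?_, ?_, ?_⟩
        · intro y hy
          rcases Finset.mem_insert.mp hy with h | h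
          · exact h ▸ hxV
          · exact (Finset.erase_subset _ _) (hW'V' h)
        · have hxW' : x ∉ W' := fun hx => (Finset.mem_erase.mp (hW'V' hx)).1 rfl
          rw [Finset.card_insert_of_notMem hxW']
          have := hpos k'
          rw [Function.update_self] at hW'card
          omega
        · intro p hp r hr hpr
          rcases Finset.mem_insert.mp hp with hp1 | hp1
          · rcases Finset.mem_insert.mp hr with hr1 | hr1
            · exact absurd (hp1.trans hr1.symm) (ne_of_lt hpr)
            · subst hp1
              have := hW'sub hr1
              exact (Finset.mem_filter.mp this).2
          · rcases Finset.mem_insert.mp hr with hr1 | hr1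
            · subst hr1
              have hle : x ≤ p := Finset.min'_le _ _ ((Finset.erase_subset _ _) (hW'V' hp1))
              omega
            · exact hW'mono p hp1 r hr1 hpr
      · refine ⟨k', W', hW'V'.trans (Finset.erase_subset _ _), ?_, hW'mono⟩
        rwa [Function.update_of_ne hkk] at hW'card

/-- Multicolour Ramsey for pairs, ordered-position version. -/
lemma my_ramsey (β : Type) [Fintype β] [DecidableEq β] [Nonempty β] (m : ℕ) :
    ∃ R : ℕ, ∀ (n : ℕ) (f : Fin n → Fin n → β) (V : Finset (Fin n)),
      R ≤ V.card → ∃ (k : β) (W : Finset (Fin n)), W ⊆ V ∧ m ≤ W.card ∧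
        ∀ p ∈ W, ∀ r ∈ W, p < r → f p r = k := by
  obtain ⟨R, -, hR⟩ := ramsey_vec (∑ _k : β, m) (fun _ => m) rfl
  exact ⟨R, hR⟩

/-- From any witness pattern containing all colours, get a minimal one. -/
lemma reduce_to_minimal (r t n : ℕ) (c : Sym2 (Fin n) → Fin r)
    (v : ℕ) (χ : Sym2 (Fin v) → Fin r) (e : Fin v × Fin t → Fin n)
    (hall : ∀ k : Fin r, ∃ a b : Fin v, χ s(a, b) = k)
    (hinj : Function.Injective e)
    (hagree : ∀ a b : Fin v × Fin t, a ≠ b → c s(e a, e b) = χ s(a.1, b.1)) :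
    ContainsUnavoidable r t n c := by
  classical
  set P : Finset (Fin v) → Prop :=
    fun S => ∀ k : Fin r, ∃ a ∈ S, ∃ b ∈ S, χ s(a, b) = k with hP
  have hPuniv : P Finset.univ := by
    intro k
    obtain ⟨a, b, hab⟩ := hall k
    exact ⟨a, mem_univ a, b, mem_univ b, hab⟩
  set 𝒮 : Finset (Finset (Fin v)) := Finset.univ.filter P with h𝒮
  have h𝒮ne : 𝒮.Nonempty := ⟨Finset.univ, Finset.mem_filter.mpr ⟨mem_univ _, hPuniv⟩⟩
  obtain ⟨S, hS𝒮, hSmin⟩ := Finset.exists_min_image 𝒮 Finset.card h𝒮ne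
  have hSP : P S := (Finset.mem_filter.mp hS𝒮).2
  set v' := S.card with hv'
  set iso := S.orderIsoOfFin hv'.symm with hiso
  set ι : Fin v' → Fin v := fun i => (iso i : Fin v) with hι
  have hιinj : Function.Injective ι := by
    intro a b hab
    have := iso.injective (Subtype.ext hab)
    exact this
  have hιmem : ∀ i, ι i ∈ S := fun i => (iso i).2
  refine ⟨v', Sym2.lift ⟨fun a b => χ s(ι a, ι b), fun a b => by show χ s(ι a, ι b) = χ s(ι b, ι a); rw [Sym2.eq_swap]⟩,
    fun p => e (ι p.1, p.2), ⟨?_, ?_⟩, ?_, ?_⟩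
  · -- all colours present
    intro k
    obtain ⟨a, ha, b, hb, hab⟩ := hSP k
    refine ⟨iso.symm ⟨a, ha⟩, iso.symm ⟨b, hb⟩, ?_⟩
    simp only [Sym2.lift_mk, hι]
    rw [show (iso (iso.symm ⟨a, ha⟩) : Fin v) = a by rw [OrderIso.apply_symm_apply],
      show (iso (iso.symm ⟨b, hb⟩) : Fin v) = b by rw [OrderIso.apply_symm_apply]]
    exact hab
  · -- minimality
    intro S' hS'
    by_contra hcon
    push_neg at hcon
    have : ∀ k : Fin r, ∃ a ∈ S', ∃ b ∈ S', χ s(ι a, ι b) = k := by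
      intro k
      obtain ⟨a, ha, b, hb, hab⟩ := hcon k
      refine ⟨a, ha, b, hb, ?_⟩
      simpa only [Sym2.lift_mk] using hab
    set T := S'.image ι with hT
    have hT𝒮 : T ∈ 𝒮 := by
      rw [h𝒮, Finset.mem_filter]
      refine ⟨mem_univ _, ?_⟩
      intro k
      obtain ⟨a, ha, b, hb, hab⟩ := this k
      exact ⟨ι a, Finset.mem_image_of_mem _ ha, ι b, Finset.mem_image_of_mem _ hb, hab⟩
    have hTcard : T.card < S.card := by
      rw [hT, Finset.card_image_of_injective _ hιinj]
      have h1 : S' ⊂ Finset.univ := (Finset.ssubset_iff_subset_ne).mpr ⟨Finset.subset_univ _, hS'⟩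
      have := Finset.card_lt_card h1
      simpa [hv'] using this
    exact absurd (hSmin T hT𝒮) (by omega)
  · -- injectivity
    intro a b hab
    have h := hinj hab
    obtain ⟨a1, a2⟩ := a
    obtain ⟨b1, b2⟩ := b
    simp only [Prod.mk.injEq] at h ⊢
    exact ⟨hιinj h.1, h.2⟩
  · -- agreement
    intro a b hab
    have hne : (ι a.1, a.2) ≠ (ι b.1, b.2) := by
      intro hcon
      apply hab
      simp only [Prod.mk.injEq] at hcon
      obtain ⟨a1, a2⟩ := a
      obtain ⟨b1, b2⟩ := b
      simp only [Prod.mk.injEq]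
      exact ⟨hιinj hcon.1, hcon.2⟩
    have := hagree (ι a.1, a.2) (ι b.1, b.2) hne
    simpa only [Sym2.lift_mk] using this

/-- Choosing pairwise disjoint subsets of prescribed size from big sets. -/
lemma disjoint_chunks {n : ℕ} (M : ℕ) : ∀ (s : ℕ) (W : ℕ → Finset (Fin n)),
    (∀ i < s, s * M ≤ (W i).card) →
    ∃ Z : ℕ → Finset (Fin n), (∀ i < s, Z i ⊆ W i ∧ (Z i).card = M) ∧
      (∀ i < s, ∀ j < s, i ≠ j → Disjoint (Z i) (Z j)) := by
  intro s
  induction s with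
  | zero => exact fun W _ => ⟨fun _ => ∅, fun i hi => absurd hi (Nat.not_lt_zero i), by omega⟩
  | succ s IH =>
    intro W hW
    obtain ⟨Z₀, hZ₀, hZ₀dis⟩ := IH W (fun i hi => le_trans (Nat.mul_le_mul_right M (Nat.le_succ s)) (hW i (Nat.lt_succ_of_lt hi)))
    set Uni := (Finset.range s).biUnion Z₀ with hUni
    have hUnicard : Uni.card ≤ s * M := by
      calc Uni.card ≤ ∑ i ∈ Finset.range s, (Z₀ i).card := Finset.card_biUnion_le
      _ ≤ ∑ _i ∈ Finset.range s, M := Finset.sum_le_sum (fun i hi => (hZ₀ i (Finset.mem_range.mp hi)).2.le)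
      _ = s * M := by simp [Finset.sum_const, mul_comm]
    have hrest : M ≤ (W s \ Uni).card := by
      have h1 : (W s).card ≤ (W s \ Uni).card + Uni.card := Finset.card_le_card_sdiff_add_card
      have h2 := hW s (Nat.lt_succ_self s)
      have h3 : (s+1) * M = s * M + M := by ring
      omega
    obtain ⟨Zs, hZs, hZscard⟩ := Finset.exists_subset_card_eq hrest
    refine ⟨fun i => if i = s then Zs else Z₀ i, ?_, ?_⟩
    · intro i hi
      by_cases h : i = s
      · subst h
        simp only [if_pos rfl]
        exact ⟨hZs.trans (Finset.sdiff_subset), hZscard⟩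
      · simp only [if_neg h]
        exact hZ₀ i (by omega)
    · intro i hi j hj hij
      by_cases h1 : i = s <;> by_cases h2 : j = s
      · omega
      · subst h1
        simp only [if_pos rfl, if_neg h2]
        have : Disjoint Zs Uni := Finset.disjoint_of_subset_left hZs (Finset.sdiff_disjoint)
        exact Finset.disjoint_of_subset_right (fun x hx => Finset.mem_biUnion.mpr ⟨j, Finset.mem_range.mpr (by omega), hx⟩) this
      · subst h2
        simp only [if_pos rfl, if_neg h1]
        have : Disjoint Zs Uni := Finset.disjoint_of_subset_left hZs (Finset.sdiff_disjoint)
        exact (Finset.disjoint_of_subset_right (fun x hx => Finset.mem_biUnion.mpr ⟨i, Finset.mem_range.mpr (by omega), hx⟩) this).symm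
      · simp only [if_neg h1, if_neg h2]
        exact hZ₀dis i (by omega) j (by omega) hij

/-- Sequential choice of pairwise disjoint sets, each valid w.r.t. the union of earlier ones. -/
lemma seq_pick {n : ℕ} (g : ℕ) : ∀ (s : ℕ) (P : ℕ → Finset (Fin n) → Prop),
    (∀ i < s, ∀ F : Finset (Fin n), F.card ≤ s * g →
      ∃ U, U.card = g ∧ Disjoint U F ∧ P i U) →
    ∃ U : ℕ → Finset (Fin n), (∀ i < s, (U i).card = g ∧ P i (U i)) ∧
      (∀ i < s, ∀ j < s, i ≠ j → Disjoint (U i) (U j)) := by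
  intro s
  induction s with
  | zero => exact fun P _ => ⟨fun _ => ∅, fun i hi => absurd hi (Nat.not_lt_zero i), by omega⟩
  | succ s IH =>
    intro P hP
    obtain ⟨U₀, hU₀, hU₀dis⟩ := IH P (fun i hi F hF =>
      hP i (Nat.lt_succ_of_lt hi) F (le_trans hF (Nat.mul_le_mul_right g (Nat.le_succ s))))
    set Uni := (Finset.range s).biUnion U₀ with hUni
    have hUnicard : Uni.card ≤ (s+1) * g := by
      calc Uni.card ≤ ∑ i ∈ Finset.range s, (U₀ i).card := Finset.card_biUnion_le
      _ ≤ ∑ _i ∈ Finset.range s, g := Finset.sum_le_sum (fun i hi => (hU₀ i (Finset.mem_range.mp hi)).1.le)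
      _ = s * g := by simp [Finset.sum_const, mul_comm]
      _ ≤ (s+1) * g := Nat.mul_le_mul_right g (Nat.le_succ s)
    obtain ⟨Us, hUscard, hUsdis, hUsP⟩ := hP s (Nat.lt_succ_self s) Uni hUnicard
    refine ⟨fun i => if i = s then Us else U₀ i, ?_, ?_⟩
    · intro i hi
      by_cases h : i = s
      · subst h; simp only [if_pos rfl]; exact ⟨hUscard, hUsP⟩
      · simp only [if_neg h]; exact hU₀ i (by omega)
    · intro i hi j hj hij
      by_cases h1 : i = s <;> by_cases h2 : j = s
      · omega
      · subst h1
        simp only [if_pos rfl, if_neg h2]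
        exact Finset.disjoint_of_subset_right (fun x hx => Finset.mem_biUnion.mpr ⟨j, Finset.mem_range.mpr (by omega), hx⟩) hUsdis
      · subst h2
        simp only [if_pos rfl, if_neg h1]
        exact (Finset.disjoint_of_subset_right (fun x hx => Finset.mem_biUnion.mpr ⟨i, Finset.mem_range.mpr (by omega), hx⟩) hUsdis).symm
      · simp only [if_neg h1, if_neg h2]
        exact hU₀dis i (by omega) j (by omega) hij



lemma DRC (t g D h : ℕ) (ht : 0 < t) :
    ∃ (C : ℝ) (n₀ : ℕ), 0 < C ∧ ∀ (n : ℕ), n₀ ≤ n →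
    ∀ (G : Fin n → Fin n → Bool) (F : Finset (Fin n)), F.card ≤ h →
    (C * (n : ℝ) ^ ((2:ℝ) - 1/(t:ℝ)) ≤ (∑ w : Fin n, ((univ.filter (fun x => G w x)).card : ℝ))) →
    ∃ U : Finset (Fin n), U.card = g ∧ Disjoint U F ∧
      ∀ T, T ⊆ U → T.card = t →
        D ≤ (univ.filter (fun w => ∀ x ∈ T, G x w)).card := by
  classical
  set B := g + t + h + 1 with hB
  refine ⟨(D : ℝ) + (B + 1 : ℕ), 1, by positivity, ?_⟩
  intro n hn G F hF hE
  have hn0 : 0 < n := hn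
  set C : ℝ := (D : ℝ) + (B + 1 : ℕ) with hC
  set deg : Fin n → ℕ := fun w => (univ.filter (fun x => G w x)).card with hdeg
  set A : (Fin t → Fin n) → Finset (Fin n) :=
    fun x => univ.filter (fun w => ∀ i, G w (x i)) with hA
  set pur : Finset (Fin n) → Finset (Fin n) :=
    fun S => univ.filter (fun y => ∀ v ∈ S, G v y) with hpur
  set Bad : Finset (Finset (Fin n)) :=
    ((univ : Finset (Fin n)).powersetCard t).filter (fun S => (pur S).card < D) with hBad
  set Y : (Fin t → Fin n) → ℕ := fun x => (Bad.filter (fun S => S ⊆ A x)).card with hY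
  -- Step 1 : ∑ x, |A x| = ∑ w, deg w ^ t
  have key1 : ∑ x : (Fin t → Fin n), (A x).card = ∑ w : Fin n, (deg w)^t := by
    have e1 : ∀ x, (A x).card = ∑ w : Fin n, if (∀ i, G w (x i)) then 1 else 0 := by
      intro x
      simp only [hA]
      rw [Finset.card_filter]
    rw [Finset.sum_congr rfl (fun x _ => e1 x), Finset.sum_comm]
    apply Finset.sum_congr rfl
    intro w _
    have e2 : (∑ x : (Fin t → Fin n), if (∀ i, G w (x i)) then 1 else 0)
        = (univ.filter (fun x : Fin t → Fin n => ∀ i, G w (x i))).card := by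
      rw [Finset.card_filter]
    rw [e2]
    have e3 : (univ.filter (fun x : Fin t → Fin n => ∀ i, G w (x i)))
        = Fintype.piFinset (fun _ : Fin t => univ.filter (fun y => G w y)) := by
      ext x
      simp [Fintype.mem_piFinset]
    rw [e3, Fintype.card_piFinset]
    simp [hdeg]
  -- Step 4 : ∑ x, Y x ≤ n^t * D^t
  have key3 : ∑ x : (Fin t → Fin n), Y x ≤ n^t * D^t := by
    have e1 : ∀ x, Y x = ∑ S ∈ Bad, if S ⊆ A x then 1 else 0 := by
      intro x
      simp only [hY]
      rw [Finset.card_filter]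
    rw [Finset.sum_congr rfl (fun x _ => e1 x), Finset.sum_comm]
    have e2 : ∀ S ∈ Bad, (∑ x : (Fin t → Fin n), if S ⊆ A x then 1 else 0) ≤ D^t := by
      intro S hS
      have hSA : ∀ x : Fin t → Fin n, S ⊆ A x ↔ ∀ i, x i ∈ pur S := by
        intro x
        constructor
        · intro hsub i
          rw [hpur]
          simp only [Finset.mem_filter, Finset.mem_univ, true_and]
          intro v hv
          have := hsub hv
          rw [hA] at this
          simp only [Finset.mem_filter, Finset.mem_univ, true_and] at this
          exact this i
        · intro hall w hw
          rw [hA]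
          simp only [Finset.mem_filter, Finset.mem_univ, true_and]
          intro i
          have := hall i
          rw [hpur] at this
          simp only [Finset.mem_filter, Finset.mem_univ, true_and] at this
          exact this w hw
      have e3 : (∑ x : (Fin t → Fin n), if S ⊆ A x then 1 else 0)
          = (univ.filter (fun x : Fin t → Fin n => S ⊆ A x)).card := by
        rw [Finset.card_filter]
      rw [e3]
      have e4 : (univ.filter (fun x : Fin t → Fin n => S ⊆ A x))
          = Fintype.piFinset (fun _ : Fin t => pur S) := by
        ext x
        simp only [Finset.mem_filter, Finset.mem_univ, true_and, Fintype.mem_piFinset]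
        exact hSA x
      rw [e4, Fintype.card_piFinset]
      have hSbad : (pur S).card < D := (Finset.mem_filter.mp hS).2
      calc (∏ _i : Fin t, (pur S).card) = (pur S).card ^ t := by
            rw [Finset.prod_const]; simp
        _ ≤ D ^ t := Nat.pow_le_pow_left hSbad.le t
    calc (∑ S ∈ Bad, ∑ x : (Fin t → Fin n), if S ⊆ A x then 1 else 0)
        ≤ ∑ _S ∈ Bad, D^t := Finset.sum_le_sum e2
      _ = Bad.card * D^t := by rw [Finset.sum_const, smul_eq_mul]
      _ ≤ n^t * D^t := by
          apply Nat.mul_le_mul_right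
          calc Bad.card ≤ ((univ : Finset (Fin n)).powersetCard t).card :=
                Finset.card_le_card (Finset.filter_subset _ _)
            _ = (n).choose t := by rw [Finset.card_powersetCard]; simp
            _ ≤ n^t := Nat.choose_le_pow n t
  -- Step 2+3 : C^t * n^t ≤ ∑ w, deg w ^ t   (in ℝ)
  have key2 : C^t * (n:ℝ)^t ≤ (∑ w : Fin n, ((deg w : ℝ))^t) := by
    obtain ⟨t', rfl⟩ : ∃ t', t = t' + 1 := ⟨t - 1, by omega⟩
    have hpm := pow_sum_div_card_le_sum_pow (s := (univ : Finset (Fin n)))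
      (f := fun w => ((deg w : ℕ) : ℝ)) (fun i _ => by positivity) t'
    have hcard : ((#(univ : Finset (Fin n))) : ℝ) = (n : ℝ) := by simp
    rw [hcard] at hpm
    have hnpos : (0:ℝ) < (n:ℝ)^t' := by positivity
    rw [div_le_iff₀ hnpos] at hpm
    -- lower bound for (∑ deg)^t
    have hCpos : (0:ℝ) ≤ C := by positivity
    have hrpos : (0:ℝ) ≤ (n : ℝ) ^ ((2:ℝ) - 1/((t'+1 : ℕ):ℝ)) := by positivity
    have hpow : (C * (n : ℝ) ^ ((2:ℝ) - 1/((t'+1 : ℕ):ℝ)))^(t'+1) ≤ (∑ w : Fin n, ((deg w : ℕ) : ℝ))^(t'+1) := by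
      apply pow_le_pow_left₀ (by positivity) hE
    have hsplit : (C * (n : ℝ) ^ ((2:ℝ) - 1/((t'+1 : ℕ):ℝ)))^(t'+1)
        = C^(t'+1) * ((n : ℝ) ^ ((2:ℝ) - 1/((t'+1 : ℕ):ℝ)))^(t'+1) := by
      rw [mul_pow]
    have hexp : (((n : ℝ) ^ ((2:ℝ) - 1/((t'+1 : ℕ):ℝ)))^(t'+1) : ℝ) = (n:ℝ)^(2*(t'+1) - 1) := by
      rw [← Real.rpow_natCast ((n : ℝ) ^ ((2:ℝ) - 1/((t'+1 : ℕ):ℝ))) (t'+1),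
        ← Real.rpow_mul (by positivity)]
      have harith : ((2:ℝ) - 1/((t'+1 : ℕ):ℝ)) * ((t'+1 : ℕ):ℝ) = ((2*(t'+1) - 1 : ℕ) : ℝ) := by
        have htne : ((t'+1 : ℕ):ℝ) ≠ 0 := by positivity
        have hc2 : ((2*(t'+1) - 1 : ℕ) : ℝ) = 2*((t'+1 : ℕ):ℝ) - 1 := by
          push_cast [Nat.cast_sub (by omega : 1 ≤ 2*(t'+1))]
          ring
        rw [hc2]
        field_simp
        try ring
      rw [harith, Real.rpow_natCast]
    have hsplit2 : (n:ℝ)^(2*(t'+1) - 1) = (n:ℝ)^(t'+1) * (n:ℝ)^t' := by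
      rw [← pow_add]
      congr 1
      omega
    have hchain : C^(t'+1) * ((n:ℝ)^(t'+1) * (n:ℝ)^t') ≤ (∑ w : Fin n, ((deg w : ℕ) : ℝ))^(t'+1) := by
      calc C^(t'+1) * ((n:ℝ)^(t'+1) * (n:ℝ)^t')
          = C^(t'+1) * (n:ℝ)^(2*(t'+1) - 1) := by rw [hsplit2]
        _ = (C * (n : ℝ) ^ ((2:ℝ) - 1/((t'+1 : ℕ):ℝ)))^(t'+1) := by rw [hsplit, hexp]
        _ ≤ _ := hpow
    have := hchain.trans hpm
    rw [← mul_assoc] at this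
    exact le_of_mul_le_mul_right this hnpos
  -- Step 5 : find a good tuple x
  have key5 : ∃ x : Fin t → Fin n, Y x + B ≤ (A x).card := by
    by_contra hc
    push_neg at hc
    have hsum : ∑ x : (Fin t → Fin n), (A x).card ≤ (∑ x : (Fin t → Fin n), Y x) + (B - 1) * n^t := by
      calc ∑ x : (Fin t → Fin n), (A x).card ≤ ∑ x : (Fin t → Fin n), (Y x + (B-1)) := by
            apply Finset.sum_le_sum
            intro x _
            have := hc x
            omega
        _ = (∑ x : (Fin t → Fin n), Y x) + (B - 1) * n^t := by
            rw [Finset.sum_add_distrib, Finset.sum_const, smul_eq_mul, Finset.card_univ,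
              Fintype.card_fun, Fintype.card_fin, Fintype.card_fin]
            ring
    have hub : ∑ x : (Fin t → Fin n), (A x).card ≤ D^t * n^t + (B-1) * n^t := by
      calc ∑ x : (Fin t → Fin n), (A x).card ≤ (∑ x : (Fin t → Fin n), Y x) + (B - 1) * n^t := hsum
        _ ≤ n^t * D^t + (B-1) * n^t := by omega
        _ = D^t * n^t + (B-1) * n^t := by ring
    -- lower bound in ℝ
    have hlbR : C^t * (n:ℝ)^t ≤ ((∑ x : (Fin t → Fin n), (A x).card : ℕ) : ℝ) := by
      rw [key1]
      push_cast
      exact key2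
    have hubR : ((∑ x : (Fin t → Fin n), (A x).card : ℕ) : ℝ) ≤ ((D:ℝ)^t + (B:ℝ) - 1) * (n:ℝ)^t := by
      calc ((∑ x : (Fin t → Fin n), (A x).card : ℕ) : ℝ) ≤ ((D^t * n^t + (B-1) * n^t : ℕ) : ℝ) := by
            exact_mod_cast hub
        _ = ((D:ℝ)^t + ((B-1:ℕ):ℝ)) * (n:ℝ)^t := by push_cast; ring
        _ ≤ ((D:ℝ)^t + (B:ℝ) - 1) * (n:ℝ)^t := by
            apply mul_le_mul_of_nonneg_right _ (by positivity)
            have hB1 : 1 ≤ B := by omega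
            have hcast : ((B-1:ℕ):ℝ) = (B:ℝ) - 1 := by
              rw [Nat.cast_sub hB1]; norm_num
            linarith [hcast.le]
    have hClb : (D:ℝ)^t + (B:ℝ) + 1 ≤ C^t := by
      have h1 : ((D:ℝ))^t + ((B+1:ℕ):ℝ)^t ≤ C^t := by
        rw [hC]
        exact pow_add_pow_le (by positivity) (by positivity) (by omega)
      have h2 : (B:ℝ) + 1 ≤ ((B+1:ℕ):ℝ)^t := by
        have : ((B+1:ℕ):ℝ) ≤ ((B+1:ℕ):ℝ)^t := le_self_pow₀ (by push_cast; linarith) (by omega)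
        push_cast at this ⊢
        linarith
      linarith
    have hnt : (0:ℝ) < (n:ℝ)^t := by positivity
    have hcontra : C^t * (n:ℝ)^t ≤ ((D:ℝ)^t + (B:ℝ) - 1) * (n:ℝ)^t := hlbR.trans hubR
    have hCle : C^t ≤ (D:ℝ)^t + (B:ℝ) - 1 := le_of_mul_le_mul_right hcontra hnt
    linarith
  obtain ⟨x, hx⟩ := key5
  -- Step 6 : build U
  set pick : Finset (Fin n) → Fin n := fun S => if hS : S.Nonempty then S.min' hS else x ⟨0, ht⟩ with hpick
  set Del := (Bad.filter (fun S => S ⊆ A x)).image pick with hDel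
  have hDelcard : Del.card ≤ Y x := by
    rw [hDel, hY]
    exact Finset.card_image_le
  set Xim := (univ : Finset (Fin t)).image x with hXim
  have hXimcard : Xim.card ≤ t := by
    calc Xim.card ≤ (univ : Finset (Fin t)).card := Finset.card_image_le
      _ = t := by simp
  set U₀ := A x \ (Del ∪ Xim ∪ F) with hU₀
  have hU₀card : g ≤ U₀.card := by
    have h1 : (A x).card ≤ U₀.card + (Del ∪ Xim ∪ F).card := Finset.card_le_card_sdiff_add_card
    have h2 : (Del ∪ Xim ∪ F).card ≤ Del.card + Xim.card + F.card := by
      calc (Del ∪ Xim ∪ F).card ≤ (Del ∪ Xim).card + F.card := Finset.card_union_le _ _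
        _ ≤ Del.card + Xim.card + F.card := by
            have := Finset.card_union_le Del Xim
            omega
    omega
  obtain ⟨U, hUsub, hUcard⟩ := Finset.exists_subset_card_eq hU₀card
  refine ⟨U, hUcard, ?_, ?_⟩
  · rw [Finset.disjoint_left]
    intro a haU haF
    have := hUsub haU
    rw [hU₀, Finset.mem_sdiff] at this
    exact this.2 (Finset.mem_union.mpr (Or.inr haF))
  · intro T hTU hTcard
    by_contra hbad
    push_neg at hbad
    have hTA : T ⊆ A x := by
      intro a ha
      have := hUsub (hTU ha)
      rw [hU₀, Finset.mem_sdiff] at this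
      exact this.1
    have hTBad : T ∈ Bad := by
      rw [hBad, Finset.mem_filter, Finset.mem_powersetCard]
      exact ⟨⟨Finset.subset_univ _, hTcard⟩, hbad⟩
    have hTne : T.Nonempty := Finset.card_pos.mp (by omega)
    have hpickT : pick T ∈ Del := by
      rw [hDel]
      exact Finset.mem_image_of_mem _ (Finset.mem_filter.mpr ⟨hTBad, hTA⟩)
    have hpickTT : pick T ∈ T := by
      rw [hpick]
      simp only [dif_pos hTne]
      exact Finset.min'_mem _ _
    have := hUsub (hTU hpickTT)
    rw [hU₀, Finset.mem_sdiff] at this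
    exact this.2 (Finset.mem_union.mpr (Or.inl (Finset.mem_union.mpr (Or.inl hpickT))))



/-- Maximum fiber has proportional size. -/
lemma max_fiber {n : ℕ} {β : Type} [Fintype β] [DecidableEq β] [Nonempty β]
    (S : Finset (Fin n)) (f : Fin n → β) :
    ∃ b : β, S.card ≤ Fintype.card β * (S.filter (fun x => f x = b)).card := by
  obtain ⟨b, -, hb⟩ := Finset.exists_max_image Finset.univ
    (fun b => (S.filter (fun x => f x = b)).card) univ_nonempty
  refine ⟨b, ?_⟩
  calc S.card = ∑ b' : β, (S.filter (fun x => f x = b')).card :=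
        Finset.card_eq_sum_card_fiberwise (fun x _ => mem_univ _)
    _ ≤ ∑ _b' : β, (S.filter (fun x => f x = b)).card :=
        Finset.sum_le_sum (fun b' _ => hb b' (mem_univ _))
    _ = Fintype.card β * (S.filter (fun x => f x = b)).card := by
        rw [Finset.sum_const, smul_eq_mul, Finset.card_univ]

/-- Compatible tuple lemma: given "homes" `B i` and, for each pair `i ≠ j` and
each candidate `t`-set `T` in home `i`, a colouring function `u i j T` on home `j`,
one can pick `t`-sets `T i ⊆ B i` such that `u i j (T i)` is constant on `T j`
for all `i ≠ j`, provided homes are large enough. -/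
lemma CT (r t : ℕ) (hr : 0 < r) :
    ∀ (s : ℕ), ∃ N : ℕ → ℕ, (∀ i, t ≤ N i) ∧ ∀ (n : ℕ) (B : ℕ → Finset (Fin n))
      (u : ℕ → ℕ → Finset (Fin n) → Fin n → Fin r),
      (∀ i, i < s → N i ≤ (B i).card) →
      ∃ T : ℕ → Finset (Fin n),
        (∀ i, i < s → T i ⊆ B i ∧ (T i).card = t) ∧
        (∀ i j, i < s → j < s → i ≠ j → ∀ x ∈ T j, ∀ y ∈ T j,
          u i j (T i) x = u i j (T i) y) := by
  intro s
  induction s with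
  | zero =>
    exact ⟨fun _ => t, fun _ => le_refl t, fun n B u _ =>
      ⟨fun _ => ∅, fun i hi => absurd hi (Nat.not_lt_zero i), fun i j hi => absurd hi (Nat.not_lt_zero i)⟩⟩
  | succ s IH =>
    obtain ⟨N₀, hN₀t, hIH⟩ := IH
    -- sizes
    set Lmax := (∏ i ∈ Finset.range s, 2^(r * N₀ i)) + 1 with hLmax
    set NS := t * (r^s)^Lmax with hNS
    set N : ℕ → ℕ := fun i => if i = s then NS else (if i < s then r * N₀ i else t) with hN
    have hrs1 : 1 ≤ r^s := Nat.one_le_pow _ _ hr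
    have hrsm : ∀ m, 1 ≤ (r^s)^m := fun m => Nat.one_le_pow _ _ (by omega)
    refine ⟨N, ?_, ?_⟩
    · intro i
      rw [hN]
      by_cases h1 : i = s
      · simp only [if_pos h1, hNS]
        calc t = t * 1 := by ring
          _ ≤ t * (r^s)^Lmax := Nat.mul_le_mul_left t (hrsm Lmax)
      · simp only [if_neg h1]
        by_cases h2 : i < s
        · simp only [if_pos h2]
          calc t ≤ N₀ i := hN₀t i
            _ = 1 * N₀ i := by ring
            _ ≤ r * N₀ i := Nat.mul_le_mul_right _ hr
        · simp only [if_neg h2]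
          exact le_refl t
    have hNs : N s = NS := by simp [hN]
    have hNlt : ∀ i, i < s → N i = r * N₀ i := by
      intro i hi
      simp only [hN]
      rw [if_neg (by omega), if_pos hi]
    intro n B u hB
    classical
    haveI : Nonempty (Fin r) := ⟨⟨0, hr⟩⟩
    -- exact-size homes
    have hBs : NS ≤ (B s).card := by
      have := hB s (Nat.lt_succ_self s)
      rwa [hNs] at this
    obtain ⟨Bs', hBs'sub, hBs'card⟩ := Finset.exists_subset_card_eq hBs
    have hBi : ∀ i, i < s → r * N₀ i ≤ (B i).card := by
      intro i hi
      have := hB i (Nat.lt_succ_of_lt hi)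
      rwa [hNlt i hi] at this
    have hBi' : ∀ i, i < s → ∃ B', B' ⊆ B i ∧ B'.card = r * N₀ i :=
      fun i hi => Finset.exists_subset_card_eq (hBi i hi)
    choose B' hB'sub hB'card using fun (i : Fin s) => hBi' i.1 i.2
    -- the round sequence
    have hrounds : ∀ (L : ℕ), L ≤ Lmax →
        ∃ (K : ℕ → Finset (Fin n)) (TS : ℕ → Finset (Fin n)) (TT : ℕ → ℕ → Finset (Fin n)),
          K 0 = Bs' ∧
          (∀ m, m ≤ L → NS ≤ (r^s)^m * (K m).card) ∧
          (∀ m₁ m₂, m₁ ≤ m₂ → m₂ ≤ L → K m₂ ⊆ K m₁) ∧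
          (∀ m, m < L →
            (TS m ⊆ K m ∧ (TS m).card = t) ∧
            (∀ i : Fin s, TT m i ⊆ B' i ∧ (TT m i).card = t) ∧
            (∀ i : Fin s, ∀ x ∈ TT m i, ∀ y ∈ TT m i,
              u s i (TS m) x = u s i (TS m) y) ∧
            (∀ i j, i < s → j < s → i ≠ j → ∀ x ∈ TT m j, ∀ y ∈ TT m j,
              u i j (TT m i) x = u i j (TT m i) y) ∧
            (∀ i : Fin s, ∀ w ∈ K (m+1), ∀ w' ∈ K (m+1),
              u i s (TT m i) w = u i s (TT m i) w')) := by
      intro L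
      induction L with
      | zero =>
        intro _
        refine ⟨fun _ => Bs', fun _ => ∅, fun _ _ => ∅, rfl, ?_, ?_, ?_⟩
        · intro m hm
          interval_cases m
          rw [hBs'card]
          calc NS = 1 * NS := by ring
            _ ≤ (r^s)^0 * NS := by simp
        · intro m₁ m₂ h12 h2L
          interval_cases m₂
          interval_cases m₁
          exact subset_rfl
        · intro m hm
          exact absurd hm (Nat.not_lt_zero m)
      | succ L IHL =>
        intro hL1
        obtain ⟨K, TS, TT, hK0, hKcard, hKanti, hprops⟩ := IHL (by omega)
        -- construct round L
        have hKLcard : t ≤ (K L).card := by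
          have h1 := hKcard L (le_refl L)
          have h2 : (r^s)^L ≤ (r^s)^Lmax := Nat.pow_le_pow_right (by omega) (by omega)
          have hpos : 0 < (r^s)^Lmax := hrsm Lmax
          have h4 : (r^s)^Lmax * t ≤ (r^s)^Lmax * (K L).card := by
            calc (r^s)^Lmax * t = t * (r^s)^Lmax := by ring
              _ ≤ (r^s)^L * (K L).card := by rw [hNS] at h1; exact h1
              _ ≤ (r^s)^Lmax * (K L).card := Nat.mul_le_mul_right _ h2
          exact Nat.le_of_mul_le_mul_left h4 hpos
        obtain ⟨TSL, hTSLsub, hTSLcard⟩ := Finset.exists_subset_card_eq hKLcard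
        -- restricted homes via majority fibers
        have hBres : ∀ i : Fin s, ∃ Bres, Bres ⊆ B' i ∧ N₀ i ≤ Bres.card ∧
            ∀ x ∈ Bres, ∀ y ∈ Bres, u s i (TSL) x = u s i (TSL) y := by
          intro i
          obtain ⟨b, hb⟩ := max_fiber (B' i) (fun x => u s i TSL x)
          refine ⟨(B' i).filter (fun x => u s i TSL x = b), Finset.filter_subset _ _, ?_, ?_⟩
          · rw [Fintype.card_fin] at hb
            have := hB'card i
            have hr0 : 0 < r := hr
            nlinarith [hb, this]
          · intro x hx y hy
            have hx' := (Finset.mem_filter.mp hx).2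
            have hy' := (Finset.mem_filter.mp hy).2
            rw [hx', hy']
        choose Bres hBressub hBrescard hBresconst using hBres
        -- apply the induction hypothesis (inner tuple)
        obtain ⟨TTL, hTTL1, hTTL2⟩ := hIH n (fun i => if h : i < s then Bres ⟨i, h⟩ else ∅) u
          (by
            intro i hi
            simp only [dif_pos hi]
            exact hBrescard ⟨i, hi⟩)
        -- next K: joint fiber
        have hnewK : ∃ newK, newK ⊆ K L ∧ (K L).card ≤ r^s * newK.card ∧
            ∀ w ∈ newK, ∀ w' ∈ newK, ∀ i : Fin s, u i s (TTL i) w = u i s (TTL i) w' := by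
          obtain ⟨b, hb⟩ := max_fiber (K L) (fun w => (fun i : Fin s => u i s (TTL i) w))
          refine ⟨(K L).filter (fun w => (fun i : Fin s => u i s (TTL i) w) = b),
            Finset.filter_subset _ _, ?_, ?_⟩
          · have hcb : Fintype.card (Fin s → Fin r) = r^s := by
              rw [Fintype.card_fun, Fintype.card_fin, Fintype.card_fin]
            rwa [hcb] at hb
          · intro w hw w' hw' i
            have hw1 := (Finset.mem_filter.mp hw).2
            have hw1' := (Finset.mem_filter.mp hw').2
            have := congrFun hw1 i
            have h2 := congrFun hw1' i
            rw [this, h2]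
        obtain ⟨newK, hnewKsub, hnewKcard, hnewKconst⟩ := hnewK
        refine ⟨fun m => if m = L+1 then newK else K m,
          fun m => if m = L then TSL else TS m,
          fun m => if m = L then TTL else TT m, ?_, ?_, ?_, ?_⟩
        · simp only [if_neg (by omega : (0:ℕ) ≠ L+1)]
          exact hK0
        · intro m hm
          by_cases h : m = L+1
          · subst h
            simp only [if_pos rfl]
            have h1 := hKcard L (le_refl L)
            calc NS ≤ (r^s)^L * (K L).card := h1
              _ ≤ (r^s)^L * (r^s * newK.card) := Nat.mul_le_mul_left _ hnewKcard
              _ = (r^s)^(L+1) * newK.card := by ring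
          · simp only [if_neg h]
            exact hKcard m (by omega)
        · intro m₁ m₂ h12 h2L
          by_cases h2 : m₂ = L+1
          · subst h2
            by_cases h1 : m₁ = L+1
            · subst h1; simp only [if_pos rfl]; exact subset_rfl
            · simp only [if_pos rfl, if_neg h1]
              exact hnewKsub.trans (hKanti m₁ L (by omega) (le_refl L))
          · simp only [if_neg h2, if_neg (by omega : m₁ ≠ L+1)]
            exact hKanti m₁ m₂ h12 (by omega)
        · intro m hm
          by_cases h : m = L
          · rw [h]
            simp only [if_pos rfl, if_neg (show L ≠ L+1 by omega),
              if_pos (show L+1 = L+1 from rfl)]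
            refine ⟨⟨hTSLsub, hTSLcard⟩, ?_, ?_, ?_, ?_⟩
            · intro i
              have h1 := (hTTL1 i.1 i.2).1
              rw [dif_pos i.2, Fin.eta] at h1
              exact ⟨h1.trans (hBressub i), (hTTL1 i.1 i.2).2⟩
            · intro i x hx y hy
              have h1 := (hTTL1 i.1 i.2).1
              rw [dif_pos i.2, Fin.eta] at h1
              exact hBresconst i x (h1 hx) y (h1 hy)
            · exact hTTL2
            · intro i w hw w' hw'
              exact hnewKconst w hw w' hw' i
          · have hne1 : m ≠ L + 1 := by omega
            have hne2 : m + 1 ≠ L + 1 := by omega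
            simp only [if_neg h, if_neg hne1, if_neg hne2]
            exact hprops m (by omega)
    -- run the rounds up to Lmax and pigeonhole
    obtain ⟨K, TS, TT, hK0, hKcard, hKanti, hprops⟩ := hrounds Lmax (le_refl Lmax)
    have hmaps : ∀ m ∈ Finset.range Lmax,
        (fun i : Fin s => TT m i.1) ∈ Fintype.piFinset (fun i : Fin s => (B' i).powerset) := by
      intro m hm
      rw [Fintype.mem_piFinset]
      intro i
      rw [Finset.mem_powerset]
      exact ((hprops m (Finset.mem_range.mp hm)).2.1 i).1
    have hcardlt : (Fintype.piFinset (fun i : Fin s => (B' i).powerset)).card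
        < (Finset.range Lmax).card := by
      rw [Fintype.card_piFinset, Finset.card_range]
      have : ∀ i : Fin s, ((B' i).powerset).card = 2^(r * N₀ i.1) := by
        intro i
        rw [Finset.card_powerset, hB'card i]
      rw [Finset.prod_congr rfl (fun i _ => this i)]
      rw [hLmax]
      rw [← Fin.prod_univ_eq_prod_range (fun i => 2^(r * N₀ i)) s]
      omega
    obtain ⟨m1, hm1, m2, hm2, hne, heq⟩ :=
      Finset.exists_ne_map_eq_of_card_lt_of_maps_to hcardlt hmaps
    -- wlog m1 < m2
    have hwlog : ∃ m m', m < m' ∧ m' < Lmax ∧ ∀ i : Fin s, TT m i.1 = TT m' i.1 := by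
      rcases Nat.lt_or_ge m1 m2 with h | h
      · exact ⟨m1, m2, h, Finset.mem_range.mp hm2, fun i => congrFun heq i⟩
      · have : m2 < m1 := by omega
        exact ⟨m2, m1, this, Finset.mem_range.mp hm1, fun i => (congrFun heq i).symm⟩
    obtain ⟨m, m', hmm', hm'L, hTTeq⟩ := hwlog
    have hmL : m < Lmax := by omega
    have hpm := hprops m hmL
    have hpm' := hprops m' hm'L
    refine ⟨fun i => if i = s then TS m' else TT m' i, ?_, ?_⟩
    · intro i hi
      by_cases h : i = s
      · rw [h]
        simp only [if_pos rfl]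
        have h1 : TS m' ⊆ K m' := hpm'.1.1
        have h2 : K m' ⊆ K 0 := hKanti 0 m' (Nat.zero_le _) (by omega)
        exact ⟨(h1.trans h2).trans (hK0 ▸ hBs'sub), hpm'.1.2⟩
      · have hilt : i < s := by omega
        simp only [if_neg h]
        have := hpm'.2.1 ⟨i, hilt⟩
        exact ⟨this.1.trans (hB'sub ⟨i, hilt⟩), this.2⟩
    · intro i j hi hj hij x hx y hy
      by_cases h1 : i = s <;> by_cases h2 : j = s
      · omega
      · -- i = s, j < s : purity of TS m' on TT m' j
        have hjlt : j < s := by omega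
        rw [h1]
        simp only [if_pos rfl, if_neg h2] at hx hy ⊢
        exact hpm'.2.2.1 ⟨j, hjlt⟩ x hx y hy
      · -- i < s, j = s : stability from round m
        have hilt : i < s := by omega
        simp only [if_pos h2] at hx hy
        rw [h2]
        simp only [if_neg h1]
        have hTTi : TT m' i = TT m i := (hTTeq ⟨i, hilt⟩).symm
        rw [hTTi]
        have hsubK : TS m' ⊆ K (m+1) := by
          have h3 : TS m' ⊆ K m' := hpm'.1.1
          exact h3.trans (hKanti (m+1) m' (by omega) (by omega))
        exact hpm.2.2.2.2 ⟨i, hilt⟩ x (hsubK hx) y (hsubK hy)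
      · -- both < s
        have hilt : i < s := by omega
        have hjlt : j < s := by omega
        simp only [if_neg h1, if_neg h2] at hx hy ⊢
        exact hpm'.2.2.2.1 i j hilt hjlt hij x hx y hy

/-- Segment embedding `Fin r × Fin m → Fin (r*m)`. -/
def seg (r m : ℕ) (k : Fin r) (j : Fin m) : Fin (r * m) :=
  ⟨k.1 * m + j.1, by
    have h1 : j.1 < m := j.2
    have h2 : k.1 + 1 ≤ r := k.2
    have h3 : k.1 * m + j.1 < k.1 * m + m := by omega
    have h4 : k.1 * m + m = (k.1 + 1) * m := by ring
    have h5 : (k.1 + 1) * m ≤ r * m := Nat.mul_le_mul_right m h2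
    omega⟩

lemma seg_lt {r m : ℕ} {k k' : Fin r} {j j' : Fin m} (h : k.1 < k'.1) :
    seg r m k j < seg r m k' j' := by
  have h1 : j.1 < m := j.2
  have h3 : k.1 * m + j.1 < k.1 * m + m := by omega
  have h4 : k.1 * m + m = (k.1 + 1) * m := by ring
  have h5 : (k.1 + 1) * m ≤ k'.1 * m := Nat.mul_le_mul_right m (by omega)
  have h6 : k'.1 * m ≤ k'.1 * m + j'.1 := by omega
  show (k.1 * m + j.1) < (k'.1 * m + j'.1)
  omega

lemma seg_lt_same {r m : ℕ} {k : Fin r} {j j' : Fin m} (h : j.1 < j'.1) :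
    seg r m k j < seg r m k j' := by
  show (k.1 * m + j.1) < (k.1 * m + j'.1)
  exact Nat.add_lt_add_left h _

/-- Ramsey blocks: from large disjoint sets, extract blocks with constant
internal pair-colour and constant cross pair-colours. -/
lemma ramsey_blocks (r m : ℕ) (hr : 0 < r) :
    ∃ g : ℕ, ∀ (n : ℕ) (f : Fin n → Fin n → Fin r),
      (∀ x y, f x y = f y x) →
      ∀ (S : Fin r → Finset (Fin n)), (∀ k, g ≤ (S k).card) →
      ∃ bemb : Fin r → Fin m → Fin n,
        (∀ k j, bemb k j ∈ S k) ∧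
        (∀ k, Function.Injective (bemb k)) ∧
        (∀ k, ∃ vv, ∀ j j', j ≠ j' → f (bemb k j) (bemb k j') = vv) ∧
        (∀ k k', k ≠ k' → ∃ vv, ∀ j j', f (bemb k j) (bemb k' j') = vv) := by
  classical
  haveI : Nonempty (Fin r) := ⟨⟨0, hr⟩⟩
  obtain ⟨R, hR⟩ := my_ramsey (Fin r × Fin r → Fin r) (r * m)
  refine ⟨R + r * m + 1, ?_⟩
  intro n f hf S hS
  -- exact-size subsets and their enumerations
  have hSk : ∀ k, ∃ S', S' ⊆ S k ∧ S'.card = R + r * m + 1 :=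
    fun k => Finset.exists_subset_card_eq (hS k)
  choose S' hS'sub hS'card using hSk
  set g := R + r * m + 1 with hg
  set uembf : Fin r → Fin g → Fin n :=
    fun k p => ((S' k).orderIsoOfFin (hS'card k) p : Fin n) with huembf
  have huemb_mem : ∀ k p, uembf k p ∈ S k :=
    fun k p => hS'sub k ((S' k).orderIsoOfFin (hS'card k) p).2
  have huemb_inj : ∀ k, Function.Injective (uembf k) := by
    intro k a b hab
    exact ((S' k).orderIsoOfFin (hS'card k)).injective (Subtype.ext hab)
  -- Ramsey on positions
  set pcol : Fin g → Fin g → (Fin r × Fin r → Fin r) :=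
    fun p q => fun ij => f (uembf ij.1 p) (uembf ij.2 q) with hpcol
  obtain ⟨κ, W, hWsub, hWcard, hWmono⟩ := hR g pcol univ
    (by rw [Finset.card_univ, Fintype.card_fin]; omega)
  obtain ⟨W', hW'sub, hW'card⟩ := Finset.exists_subset_card_eq hWcard
  set ω := W'.orderIsoOfFin hW'card with hω
  set bemb : Fin r → Fin m → Fin n :=
    fun k j => uembf k (ω (seg r m k j) : Fin g) with hbemb
  have hωmono : ∀ a b : Fin (r*m), a < b → ((ω a : Fin g)) < ((ω b : Fin g)) := by
    intro a b hab
    exact_mod_cast ω.strictMono hab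
  have hωW : ∀ a, ((ω a : Fin g)) ∈ W := fun a => hW'sub (ω a).2
  have hpair : ∀ (k k' : Fin r) (j : Fin m) (j' : Fin m),
      seg r m k j < seg r m k' j' → f (bemb k j) (bemb k' j') = κ (k, k') := by
    intro k k' j j' hlt
    have h1 := hWmono _ (hωW (seg r m k j)) _ (hωW (seg r m k' j')) (hωmono _ _ hlt)
    exact congrFun h1 (k, k')
  refine ⟨bemb, fun k j => huemb_mem k _, ?_, ?_, ?_⟩
  · intro k a b hab
    have h1 : (ω (seg r m k a) : Fin g) = (ω (seg r m k b) : Fin g) := huemb_inj k hab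
    have h2 : seg r m k a = seg r m k b := ω.injective (Subtype.ext h1)
    have h3 : k.1 * m + a.1 = k.1 * m + b.1 := congrArg Fin.val h2
    exact Fin.ext (by omega)
  · intro k
    refine ⟨κ (k, k), ?_⟩
    intro j j' hjj
    rcases Nat.lt_or_ge j.1 j'.1 with h | h
    · exact hpair k k j j' (seg_lt_same h)
    · have h2 : j'.1 < j.1 := by
        rcases Nat.lt_or_ge j'.1 j.1 with h' | h'
        · exact h'
        · exact absurd (Fin.ext (by omega) : j = j') hjj
      rw [hf]
      exact hpair k k j' j (seg_lt_same h2)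
  · intro k k' hkk
    rcases Nat.lt_or_ge k.1 k'.1 with h | h
    · refine ⟨κ (k, k'), fun j j' => hpair k k' j j' (seg_lt h)⟩
    · have h2 : k'.1 < k.1 := by
        rcases Nat.lt_or_ge k'.1 k.1 with h' | h'
        · exact h'
        · exact absurd (Fin.ext (by omega) : k = k') hkk
      refine ⟨κ (k', k), fun j j' => ?_⟩
      rw [hf]
      exact hpair k' k j' j (seg_lt h2)

/-- Edge count of a colour is at most the degree sum. -/
lemma edge_count_le_deg_sum (r n : ℕ) (c : Sym2 (Fin n) → Fin r) (kF : Fin r) :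
    ({e : Sym2 (Fin n) | ¬ e.IsDiag ∧ c e = kF}.ncard : ℕ) ≤
      ∑ w : Fin n, (univ.filter
        (fun x => (decide (x ≠ w ∧ (c s(w,x)).val = kF.val) : Bool))).card := by
  classical
  set P := (univ : Finset (Sym2 (Fin n))).filter (fun e => ¬ e.IsDiag ∧ c e = kF) with hP
  have h1 : {e : Sym2 (Fin n) | ¬ e.IsDiag ∧ c e = kF} = ↑P := by
    ext e
    simp [hP]
  rw [h1, Set.ncard_coe_finset]
  have h2 : ∑ w : Fin n, (univ.filter
        (fun x => (decide (x ≠ w ∧ (c s(w,x)).val = kF.val) : Bool))).card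
      = ((univ : Finset (Fin n)).sigma (fun w => univ.filter
        (fun x => (decide (x ≠ w ∧ (c s(w,x)).val = kF.val) : Bool)))).card := by
    rw [Finset.card_sigma]
  rw [h2]
  apply Finset.card_le_card_of_injOn (fun e => ⟨(Quot.out e).1, (Quot.out e).2⟩)
  · intro e he
    rw [hP, Finset.mem_coe, Finset.mem_filter] at he
    obtain ⟨-, hdiag, hcol⟩ := he
    rw [Finset.mem_coe, Finset.mem_sigma]
    refine ⟨mem_univ _, ?_⟩
    rw [Finset.mem_filter]
    refine ⟨mem_univ _, ?_⟩
    have hmk : s((Quot.out e).1, (Quot.out e).2) = e := by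
      exact Quot.out_eq e
    have hne : (Quot.out e).2 ≠ (Quot.out e).1 := by
      intro hc
      apply hdiag
      rw [← hmk]
      exact Sym2.isDiag_iff_proj_eq.mpr hc.symm
    simp only [decide_eq_true_eq]
    exact ⟨hne, by rw [hmk, hcol]⟩
  · intro e he e' he' heq
    rw [Sigma.ext_iff] at heq
    obtain ⟨ha, hb⟩ := heq
    have hb' : (Quot.out e).2 = (Quot.out e').2 := eq_of_heq hb
    have : Quot.out e = Quot.out e' := Prod.ext ha hb'
    rw [← Quot.out_eq e, ← Quot.out_eq e', this]

/-- The `min` pattern is r-minimal. -/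
lemma min_pattern (r : ℕ) :
    IsRMinimal r r (Sym2.lift ⟨fun a b => min a b, fun a b => min_comm a b⟩) := by
  constructor
  · intro k
    exact ⟨k, k, by rw [Sym2.lift_mk]; simp⟩
  · intro S hS
    have hex : ∃ m : Fin r, m ∉ S := by
      by_contra hc
      push_neg at hc
      exact hS (Finset.eq_univ_iff_forall.mpr hc)
    obtain ⟨m, hm⟩ := hex
    refine ⟨m, fun a ha b hb hab => ?_⟩
    rw [Sym2.lift_mk] at hab
    have hab' : min a b = m := hab
    rcases min_choice a b with h | h <;> rw [h] at hab'
    · exact hm (hab' ▸ ha)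
    · exact hm (hab' ▸ hb)

/-- The main machine for `r ≥ 1`, `t ≥ 1`. -/
lemma main_machine (r t : ℕ) (hr : 0 < r) (ht : 0 < t) :
    ∃ C : ℝ, 0 < C ∧ ∃ n₀ : ℕ, ∀ n : ℕ, n₀ ≤ n →
      ∀ c : Sym2 (Fin n) → Fin r,
        (∀ k : Fin r,
          C * (n : ℝ) ^ ((2 : ℝ) - 1 / (t : ℝ)) ≤
            ({e : Sym2 (Fin n) | ¬ e.IsDiag ∧ c e = k}.ncard : ℝ)) →
        ContainsUnavoidable r t n c := by
  classical
  haveI : Nonempty (Fin r) := ⟨⟨0, hr⟩⟩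
  obtain ⟨Ncv, hNcvt, hCT⟩ := CT r t hr r
  set NN := (Finset.range r).sup Ncv + t with hNN
  obtain ⟨gH, hgH⟩ := ramsey_blocks r NN hr
  obtain ⟨gY, hgY⟩ := ramsey_blocks r t hr
  set MY := gY + 1 with hMY
  set TWF := r ^ (r * NN) with hTWF
  set Dd := TWF * (r * MY) + r * gH + 1 with hDd
  obtain ⟨C₀, n₀₀, hC₀pos, hDRC⟩ := DRC t gH Dd (r * gH) ht
  refine ⟨C₀, hC₀pos, max n₀₀ 1, ?_⟩
  intro n hn c hcol
  have hn00 : n₀₀ ≤ n := le_trans (le_max_left _ _) hn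
  have hn1 : 0 < n := lt_of_lt_of_le (by omega) (le_trans (le_max_right _ _) hn)
  set f : Fin n → Fin n → Fin r := fun a b => c s(a, b) with hfdef
  have hfsymm : ∀ x y, f x y = f y x := by
    intro x y
    show c s(x, y) = c s(y, x)
    rw [Sym2.eq_swap]
  set G : ℕ → Fin n → Fin n → Bool :=
    fun k w x => decide (x ≠ w ∧ (c s(w, x)).val = k) with hG
  -- degree bounds
  have hdeg : ∀ kF : Fin r, C₀ * (n : ℝ) ^ ((2:ℝ) - 1/(t:ℝ)) ≤
      ∑ w : Fin n, ((univ.filter (fun x => G kF.val w x)).card : ℝ) := by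
    intro kF
    refine le_trans (hcol kF) ?_
    have h1 := edge_count_le_deg_sum r n c kF
    calc (({e : Sym2 (Fin n) | ¬ e.IsDiag ∧ c e = kF}.ncard : ℕ) : ℝ)
        ≤ ((∑ w : Fin n, (univ.filter
            (fun x => (decide (x ≠ w ∧ (c s(w,x)).val = kF.val) : Bool))).card : ℕ) : ℝ) := by
          exact_mod_cast h1
      _ = ∑ w : Fin n, ((univ.filter (fun x => G kF.val w x)).card : ℝ) := by
          rw [Nat.cast_sum]
  -- DRC per colour, sequentially
  obtain ⟨U, hU, hUdis⟩ := seq_pick gH r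
    (fun k U => ∀ T, T ⊆ U → T.card = t →
      Dd ≤ (univ.filter (fun w => ∀ x ∈ T, G k x w)).card)
    (by
      intro k hk F hF
      obtain ⟨U, h1, h2, h3⟩ := hDRC n hn00 (G k) F hF (hdeg ⟨k, hk⟩)
      exact ⟨U, h1, h2, h3⟩)
  -- homes
  obtain ⟨bH, hbHmem, hbHinj, hbHint, hbHcross⟩ := hgH n f hfsymm (fun k => U k.1)
    (fun k => le_of_eq ((hU k.1 k.2).1).symm)
  set home : Fin r → Finset (Fin n) := fun k => (univ : Finset (Fin NN)).image (bH k) with hhome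
  have hhomecard : ∀ k, (home k).card = NN := by
    intro k
    simp only [hhome]
    rw [Finset.card_image_of_injective _ (hbHinj k)]
    simp
  have hhomesub : ∀ k, home k ⊆ U k.1 := by
    intro k x hx
    rw [hhome] at hx
    obtain ⟨j, -, hj⟩ := Finset.mem_image.mp hx
    exact hj ▸ hbHmem k j
  -- twins apparatus
  set allU := (Finset.range r).biUnion U with hallU
  have hallUcard : allU.card ≤ r * gH := by
    calc allU.card ≤ ∑ i ∈ Finset.range r, (U i).card := Finset.card_biUnion_le
      _ ≤ ∑ _i ∈ Finset.range r, gH :=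
          Finset.sum_le_sum (fun i hi => le_of_eq (hU i (Finset.mem_range.mp hi)).1)
      _ = r * gH := by rw [Finset.sum_const, Finset.card_range, smul_eq_mul]
  set vec : Fin n → (Fin r × Fin NN → Fin r) := fun w ij => f w (bH ij.1 ij.2) with hvec
  set pureF : ℕ → Finset (Fin n) → Finset (Fin n) :=
    fun k T => univ.filter (fun w => ∀ x ∈ T, G k x w) with hpureF
  set W₀ : ℕ → Finset (Fin n) → Finset (Fin n) := fun k T => pureF k T \ allU with hW₀
  have hmf : ∀ (k : ℕ) (T : Finset (Fin n)), ∃ b,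
      (W₀ k T).card ≤ TWF * ((W₀ k T).filter (fun w => vec w = b)).card := by
    intro k T
    obtain ⟨b, hb⟩ := max_fiber (W₀ k T) vec
    refine ⟨b, ?_⟩
    have hcb : Fintype.card (Fin r × Fin NN → Fin r) = TWF := by
      simp only [Fintype.card_fun, Fintype.card_prod, Fintype.card_fin, hTWF]
    rwa [hcb] at hb
  choose bv hbv using hmf
  set W₁ : ℕ → Finset (Fin n) → Finset (Fin n) :=
    fun k T => (W₀ k T).filter (fun w => vec w = bv k T) with hW₁
  set wit : Fin n := ⟨0, hn1⟩ with hwit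
  set rep : ℕ → Finset (Fin n) → Fin n :=
    fun k T => if h : (W₁ k T).Nonempty then (W₁ k T).min' h else wit with hrep
  -- CT application
  set Bf : ℕ → Finset (Fin n) := fun k => if h : k < r then home ⟨k, h⟩ else ∅ with hBf
  set uf : ℕ → ℕ → Finset (Fin n) → Fin n → Fin r := fun k _ T b => f (rep k T) b with huf
  obtain ⟨Tf, hTf1, hTf2⟩ := hCT n Bf uf
    (by
      intro i hi
      simp only [hBf]
      rw [dif_pos hi]
      rw [hhomecard ⟨i, hi⟩, hNN]
      have := Finset.le_sup (f := Ncv) (Finset.mem_range.mpr hi)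
      omega)
  have hTsub : ∀ k : Fin r, Tf k.1 ⊆ home k := by
    intro k
    have h1 := (hTf1 k.1 k.2).1
    simp only [hBf] at h1
    rw [dif_pos k.2] at h1
    simpa using h1
  have hTcard : ∀ k : Fin r, (Tf k.1).card = t := fun k => (hTf1 k.1 k.2).2
  -- purity and size of the twin sets
  have hW₁sub : ∀ (k : ℕ) (T : Finset (Fin n)), W₁ k T ⊆ W₀ k T :=
    fun k T => Finset.filter_subset _ _
  have hW₁pure : ∀ (k : Fin r), ∀ w ∈ W₁ k.1 (Tf k.1), ∀ x ∈ Tf k.1,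
      w ≠ x ∧ (c s(x, w)).val = k.1 := by
    intro k w hw x hx
    have h1 : w ∈ W₀ k.1 (Tf k.1) := hW₁sub _ _ hw
    rw [hW₀, Finset.mem_sdiff] at h1
    have h2 := h1.1
    rw [hpureF, Finset.mem_filter] at h2
    have h3 := h2.2 x hx
    simp only [hG, decide_eq_true_eq] at h3
    exact h3
  have hW₁notU : ∀ (k : ℕ) (T : Finset (Fin n)), ∀ w ∈ W₁ k T, w ∉ allU := by
    intro k T w hw
    have h1 : w ∈ W₀ k T := hW₁sub _ _ hw
    rw [hW₀, Finset.mem_sdiff] at h1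
    exact h1.2
  have hW₁big : ∀ k : Fin r, r * MY ≤ (W₁ k.1 (Tf k.1)).card := by
    intro k
    have hp : Dd ≤ (pureF k.1 (Tf k.1)).card := by
      have := (hU k.1 k.2).2 (Tf k.1) ((hTsub k).trans (hhomesub k)) (hTcard k)
      exact this
    have h1 : (pureF k.1 (Tf k.1)).card ≤ (W₀ k.1 (Tf k.1)).card + allU.card := by
      rw [hW₀]
      exact Finset.card_le_card_sdiff_add_card
    have h2 : TWF * (r * MY) ≤ (W₀ k.1 (Tf k.1)).card := by
      rw [hDd] at hp
      omega
    have h3 := hbv k.1 (Tf k.1)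
    have h4 : TWF * (r * MY) ≤ TWF * (W₁ k.1 (Tf k.1)).card := le_trans h2 h3
    have hTWFpos : 0 < TWF := by
      rw [hTWF]
      exact Nat.pow_pos hr
    exact Nat.le_of_mul_le_mul_left h4 hTWFpos
  have hW₁ne : ∀ k : Fin r, (W₁ k.1 (Tf k.1)).Nonempty := by
    intro k
    apply Finset.card_pos.mp
    have := hW₁big k
    have : 0 < r * MY := by
      apply Nat.mul_pos hr
      rw [hMY]; omega
    omega
  have hrepmem : ∀ k : Fin r, rep k.1 (Tf k.1) ∈ W₁ k.1 (Tf k.1) := by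
    intro k
    rw [hrep]
    simp only [dif_pos (hW₁ne k)]
    exact Finset.min'_mem _ _
  have htwin : ∀ (k : Fin r), ∀ w ∈ W₁ k.1 (Tf k.1), vec w = vec (rep k.1 (Tf k.1)) := by
    intro k w hw
    have h1 := (Finset.mem_filter.mp hw).2
    have h2 := (Finset.mem_filter.mp (hrepmem k)).2
    rw [h1, h2]
  -- chunks
  obtain ⟨Z, hZ, hZdis⟩ := disjoint_chunks MY r
    (fun k => W₁ k (Tf k))
    (fun i hi => hW₁big ⟨i, hi⟩)
  have hZsub : ∀ k : Fin r, Z k.1 ⊆ W₁ k.1 (Tf k.1) := fun k => (hZ k.1 k.2).1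
  -- Y blocks
  obtain ⟨bY, hbYmem, hbYinj, hbYint, hbYcross⟩ := hgY n f hfsymm (fun k => Z k.1)
    (by
      intro k
      rw [(hZ k.1 k.2).2, hMY]
      omega)
  have hbYW₁ : ∀ (k : Fin r) (j : Fin t), bY k j ∈ W₁ k.1 (Tf k.1) :=
    fun k j => hZsub k (hbYmem k j)
  -- T enumerations
  have hTenum : ∀ k : Fin r, ∃ en : Fin t → Fin n,
      (∀ j, en j ∈ Tf k.1) ∧ Function.Injective en := by
    intro k
    refine ⟨fun j => ((Tf k.1).orderIsoOfFin (hTcard k) j : Fin n), fun j =>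
      ((Tf k.1).orderIsoOfFin (hTcard k) j).2, ?_⟩
    intro a b hab
    exact ((Tf k.1).orderIsoOfFin (hTcard k)).injective (Subtype.ext hab)
  choose Ten hTenmem hTeninj using hTenum
  -- final blocks
  set i₀ : Fin t := ⟨0, ht⟩ with hi₀
  set bemb : Fin (2*r) → Fin t → Fin n := fun a j =>
    if h : a.1 < r then Ten ⟨a.1, h⟩ j else bY ⟨a.1 - r, by have := a.2; omega⟩ j with hbemb
  -- membership helpers
  have hbembT : ∀ (a : Fin (2*r)) (h : a.1 < r) (j : Fin t), bemb a j ∈ Tf a.1 := by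
    intro a h j
    rw [hbemb]
    simp only [dif_pos h]
    exact hTenmem ⟨a.1, h⟩ j
  have hbembY : ∀ (a : Fin (2*r)) (h : ¬ a.1 < r) (j : Fin t),
      bemb a j ∈ Z (a.1 - r) := by
    intro a h j
    rw [hbemb]
    simp only [dif_neg h]
    exact hbYmem _ j
  -- more membership helpers
  have hTinU : ∀ (a : Fin (2*r)) (h : a.1 < r) (j : Fin t), bemb a j ∈ U a.1 :=
    fun a h j => (hhomesub ⟨a.1, h⟩) ((hTsub ⟨a.1, h⟩) (hbembT a h j))
  have hYinW : ∀ (a : Fin (2*r)) (h : ¬ a.1 < r) (j : Fin t),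
      bemb a j ∈ W₁ (a.1 - r) (Tf (a.1 - r)) := by
    intro a h j
    exact hZsub ⟨a.1 - r, by have := a.2; omega⟩ (hbembY a h j)
  -- injectivity
  have hinj : Function.Injective (fun p : Fin (2*r) × Fin t => bemb p.1 p.2) := by
    intro p q hpq
    simp only at hpq
    by_cases hab : p.1 = q.1
    · have h2 : p.2 = q.2 := by
        rw [hab] at hpq
        by_cases h : q.1.1 < r
        · have e1 : ∀ jx, bemb q.1 jx = Ten ⟨q.1.1, h⟩ jx := by
            intro jx
            simp only [hbemb]
            rw [dif_pos h]
          rw [e1 p.2, e1 q.2] at hpq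
          exact hTeninj _ hpq
        · have e1 : ∀ jx, bemb q.1 jx = bY ⟨q.1.1 - r, by have := q.1.2; omega⟩ jx := by
            intro jx
            simp only [hbemb]
            rw [dif_neg h]
          rw [e1 p.2, e1 q.2] at hpq
          exact hbYinj _ hpq
      exact Prod.ext hab h2
    · exfalso
      have hne1 : p.1.1 ≠ q.1.1 := fun hc => hab (Fin.ext hc)
      by_cases h1 : p.1.1 < r <;> by_cases h2 : q.1.1 < r
      · have m1 := hTinU p.1 h1 p.2
        have m2 : bemb p.1 p.2 ∈ U q.1.1 := by
          rw [hpq]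
          exact hTinU q.1 h2 q.2
        exact Finset.disjoint_left.mp (hUdis p.1.1 h1 q.1.1 h2 hne1) m1 m2
      · have m1 : bemb p.1 p.2 ∈ allU :=
          Finset.mem_biUnion.mpr ⟨p.1.1, Finset.mem_range.mpr h1, hTinU p.1 h1 p.2⟩
        have m2 : bemb p.1 p.2 ∈ W₁ (q.1.1 - r) (Tf (q.1.1 - r)) := by
          rw [hpq]
          exact hYinW q.1 h2 q.2
        exact hW₁notU _ _ _ m2 m1
      · have m1 : bemb p.1 p.2 ∈ allU := by
          rw [hpq]
          exact Finset.mem_biUnion.mpr ⟨q.1.1, Finset.mem_range.mpr h2, hTinU q.1 h2 q.2⟩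
        have m2 := hYinW p.1 h1 p.2
        exact hW₁notU _ _ _ m2 m1
      · have hne2 : p.1.1 - r ≠ q.1.1 - r := by
          have := p.1.2
          have := q.1.2
          omega
        have m1 := hbembY p.1 h1 p.2
        have m2 : bemb p.1 p.2 ∈ Z (q.1.1 - r) := by
          rw [hpq]
          exact hbembY q.1 h2 q.2
        have hb1 : p.1.1 - r < r := by have := p.1.2; omega
        have hb2 : q.1.1 - r < r := by have := q.1.2; omega
        exact Finset.disjoint_left.mp (hZdis _ hb1 _ hb2 hne2) m1 m2
  -- internal constancy
  have hbembTmem : ∀ (a : Fin (2*r)) (h : a.1 < r) (j : Fin t),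
      ∃ jj : Fin NN, bH ⟨a.1, h⟩ jj = bemb a j := by
    intro a h j
    obtain ⟨jj, -, hjj⟩ := Finset.mem_image.mp (hTsub ⟨a.1, h⟩ (hbembT a h j))
    exact ⟨jj, hjj⟩
  have CI : ∀ a : Fin (2*r), ∃ vv, ∀ j j' : Fin t, j ≠ j' →
      f (bemb a j) (bemb a j') = vv := by
    intro a
    by_cases h : a.1 < r
    · obtain ⟨vv, hvv⟩ := hbHint ⟨a.1, h⟩
      refine ⟨vv, fun j j' hjj => ?_⟩
      obtain ⟨jj, hjj1⟩ := hbembTmem a h j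
      obtain ⟨jj', hjj2⟩ := hbembTmem a h j'
      have hne : jj ≠ jj' := by
        intro hc
        apply hjj
        have heq : (fun p : Fin (2*r) × Fin t => bemb p.1 p.2) (a, j)
            = (fun p : Fin (2*r) × Fin t => bemb p.1 p.2) (a, j') := by
          simp only
          rw [← hjj1, ← hjj2, hc]
        have h9 := hinj heq
        simpa using congrArg Prod.snd h9
      rw [← hjj1, ← hjj2]
      exact hvv jj jj' hne
    · obtain ⟨vv, hvv⟩ := hbYint ⟨a.1 - r, by have := a.2; omega⟩
      refine ⟨vv, fun j j' hjj => ?_⟩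
      have e1 : ∀ jx, bemb a jx = bY ⟨a.1 - r, by have := a.2; omega⟩ jx := by
        intro jx
        simp only [hbemb]
        rw [dif_neg h]
      rw [e1, e1]
      exact hvv j j' hjj
  -- cross constancy
  have CC : ∀ a b : Fin (2*r), a ≠ b → ∃ vv, ∀ j j' : Fin t,
      f (bemb a j) (bemb b j') = vv := by
    intro a b hab
    have hne1 : a.1 ≠ b.1 := fun hc => hab (Fin.ext hc)
    by_cases h1 : a.1 < r <;> by_cases h2 : b.1 < r
    · -- T,T
      obtain ⟨vv, hvv⟩ := hbHcross ⟨a.1, h1⟩ ⟨b.1, h2⟩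
        (by
          intro hc
          have h9 := congrArg Fin.val hc
          simp only at h9
          exact hne1 h9)
      refine ⟨vv, fun j j' => ?_⟩
      obtain ⟨jj, hjj1⟩ := hbembTmem a h1 j
      obtain ⟨jj', hjj2⟩ := hbembTmem b h2 j'
      rw [← hjj1, ← hjj2]
      exact hvv jj jj'
    · -- a T, b Y
      have hk'lt : b.1 - r < r := by have := b.2; omega
      have eb : ∀ jx, bemb b jx = bY ⟨b.1 - r, hk'lt⟩ jx := by
        intro jx
        simp only [hbemb]
        rw [dif_neg h2]
      by_cases hkk : a.1 = b.1 - r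
      · refine ⟨⟨a.1, h1⟩, fun j j' => ?_⟩
        have hy : bemb b j' ∈ W₁ (b.1 - r) (Tf (b.1 - r)) := hYinW b h2 j'
        have hx : bemb a j ∈ Tf (b.1 - r) := by
          rw [← hkk]
          exact hbembT a h1 j
        have hp := hW₁pure ⟨b.1 - r, hk'lt⟩ (bemb b j') hy (bemb a j) hx
        apply Fin.ext
        show (f (bemb a j) (bemb b j')).val = a.1
        have h5 : (f (bemb a j) (bemb b j')).val = b.1 - r := hp.2
        omega
      · refine ⟨uf (b.1 - r) a.1 (Tf (b.1 - r)) (bemb a i₀), fun j j' => ?_⟩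
        obtain ⟨jj, hjj1⟩ := hbembTmem a h1 j
        have hy : bemb b j' ∈ W₁ (b.1 - r) (Tf (b.1 - r)) := hYinW b h2 j'
        have htw := htwin ⟨b.1 - r, hk'lt⟩ _ hy
        rw [hfsymm]
        have e2 : f (bemb b j') (bemb a j) = f (rep (b.1 - r) (Tf (b.1 - r))) (bemb a j) := by
          rw [← hjj1]
          exact congrFun htw (⟨a.1, h1⟩, jj)
        rw [e2]
        exact hTf2 (b.1 - r) a.1 hk'lt h1 (by omega) (bemb a j) (hbembT a h1 j)
          (bemb a i₀) (hbembT a h1 i₀)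
    · -- a Y, b T
      have hk'lt : a.1 - r < r := by have := a.2; omega
      have ea : ∀ jx, bemb a jx = bY ⟨a.1 - r, hk'lt⟩ jx := by
        intro jx
        simp only [hbemb]
        rw [dif_neg h1]
      by_cases hkk : b.1 = a.1 - r
      · refine ⟨⟨b.1, h2⟩, fun j j' => ?_⟩
        have hy : bemb a j ∈ W₁ (a.1 - r) (Tf (a.1 - r)) := hYinW a h1 j
        have hx : bemb b j' ∈ Tf (a.1 - r) := by
          rw [← hkk]
          exact hbembT b h2 j'
        have hp := hW₁pure ⟨a.1 - r, hk'lt⟩ (bemb a j) hy (bemb b j') hx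
        apply Fin.ext
        show (f (bemb a j) (bemb b j')).val = b.1
        have h5 : (f (bemb b j') (bemb a j)).val = a.1 - r := hp.2
        rw [hfsymm] at h5
        omega
      · refine ⟨uf (a.1 - r) b.1 (Tf (a.1 - r)) (bemb b i₀), fun j j' => ?_⟩
        obtain ⟨jj, hjj1⟩ := hbembTmem b h2 j'
        have hy : bemb a j ∈ W₁ (a.1 - r) (Tf (a.1 - r)) := hYinW a h1 j
        have htw := htwin ⟨a.1 - r, hk'lt⟩ _ hy
        have e2 : f (bemb a j) (bemb b j') = f (rep (a.1 - r) (Tf (a.1 - r))) (bemb b j') := by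
          rw [← hjj1]
          exact congrFun htw (⟨b.1, h2⟩, jj)
        rw [e2]
        exact hTf2 (a.1 - r) b.1 hk'lt h2 (by omega) (bemb b j') (hbembT b h2 j')
          (bemb b i₀) (hbembT b h2 i₀)
    · -- Y,Y
      have ha' : a.1 - r < r := by have := a.2; omega
      have hb' : b.1 - r < r := by have := b.2; omega
      obtain ⟨vv, hvv⟩ := hbYcross ⟨a.1 - r, ha'⟩ ⟨b.1 - r, hb'⟩
        (by
          intro hc
          have := congrArg Fin.val hc
          simp only at this
          omega)
      refine ⟨vv, fun j j' => ?_⟩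
      have ea : ∀ jx, bemb a jx = bY ⟨a.1 - r, ha'⟩ jx := by
        intro jx
        simp only [hbemb]
        rw [dif_neg h1]
      have eb : ∀ jx, bemb b jx = bY ⟨b.1 - r, hb'⟩ jx := by
        intro jx
        simp only [hbemb]
        rw [dif_neg h2]
      rw [ea, eb]
      exact hvv j j'
  -- the pattern
  set χmat : Fin (2*r) → Fin (2*r) → Fin r := fun a b =>
    if a = b then (if h1 : 1 < t then f (bemb a i₀) (bemb a ⟨1, h1⟩)
      else f (bemb a i₀) (bemb a i₀))
    else f (bemb a i₀) (bemb b i₀) with hχmat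
  have hχsymm : ∀ a b, χmat a b = χmat b a := by
    intro a b
    by_cases h : a = b
    · rw [h]
    · simp only [hχmat, if_neg h, if_neg (Ne.symm h)]
      exact hfsymm _ _
  apply reduce_to_minimal r t n c (2*r) (Sym2.lift ⟨χmat, hχsymm⟩)
    (fun p => bemb p.1 p.2)
  · -- all colours present
    intro kF
    have hb2 : kF.1 + r < 2*r := by have := kF.2; omega
    have ha2 : kF.1 < 2*r := by have := kF.2; omega
    refine ⟨⟨kF.1, ha2⟩, ⟨kF.1 + r, hb2⟩, ?_⟩
    rw [Sym2.lift_mk]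
    have hne : (⟨kF.1, ha2⟩ : Fin (2*r)) ≠ ⟨kF.1 + r, hb2⟩ := by
      intro hc
      have := congrArg Fin.val hc
      simp only at this
      omega
    show χmat _ _ = kF
    simp only [hχmat, if_neg hne]
    have hbr : ¬ (⟨kF.1 + r, hb2⟩ : Fin (2*r)).1 < r := by
      show ¬ kF.1 + r < r
      omega
    have har : (⟨kF.1, ha2⟩ : Fin (2*r)).1 < r := kF.2
    have hk'lt : kF.1 + r - r < r := by omega
    have hx : bemb ⟨kF.1, ha2⟩ i₀ ∈ Tf (kF.1 + r - r) := by
      have e : kF.1 + r - r = kF.1 := by omega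
      rw [e]
      exact hbembT ⟨kF.1, ha2⟩ har i₀
    have hy : bemb ⟨kF.1 + r, hb2⟩ i₀ ∈ W₁ (kF.1 + r - r) (Tf (kF.1 + r - r)) :=
      hYinW ⟨kF.1 + r, hb2⟩ hbr i₀
    have hp := hW₁pure ⟨kF.1 + r - r, hk'lt⟩ _ hy _ hx
    apply Fin.ext
    have h5 : (f (bemb ⟨kF.1, ha2⟩ i₀) (bemb ⟨kF.1 + r, hb2⟩ i₀)).val = kF.1 + r - r := hp.2
    rw [h5]
    omega
  · exact hinj
  · -- agreement
    intro A B hAB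
    rw [Sym2.lift_mk]
    show f (bemb A.1 A.2) (bemb B.1 B.2) = χmat A.1 B.1
    by_cases h : A.1 = B.1
    · have hAB2 : A.2 ≠ B.2 := by
        intro hc
        exact hAB (Prod.ext h hc)
      have h1t : 1 < t := by
        by_contra hc
        push_neg at hc
        apply hAB2
        apply Fin.ext
        have hA := A.2.2
        have hB := B.2.2
        omega
      obtain ⟨vv, hvv⟩ := CI A.1
      simp only [hχmat, if_pos h]
      rw [dif_pos h1t, ← h]
      rw [hvv A.2 B.2 hAB2]
      rw [hvv i₀ ⟨1, h1t⟩ (by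
        intro hc
        have := congrArg Fin.val hc
        simp only [hi₀] at this
        omega)]
    · obtain ⟨vv, hvv⟩ := CC A.1 B.1 h
      simp only [hχmat, if_neg h]
      rw [hvv A.2 B.2, hvv i₀ i₀]

/-- For all `r, t` there is a constant `C = C(r,t) > 0` such that every
`r`-colouring of the edges of a sufficiently large complete graph `K_n` in
which every colour appears on at least `C·n^{2-1/t}` edges contains an
`(r,t)`-unavoidable graph. -/
theorem unavoidable_patterns (r t : ℕ) :
    ∃ C : ℝ, 0 < C ∧ ∃ n₀ : ℕ, ∀ n : ℕ, n₀ ≤ n →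
      ∀ c : Sym2 (Fin n) → Fin r,
        (∀ k : Fin r,
          C * (n : ℝ) ^ ((2 : ℝ) - 1 / (t : ℝ)) ≤
            ({e : Sym2 (Fin n) | ¬ e.IsDiag ∧ c e = k}.ncard : ℝ)) →
        ContainsUnavoidable r t n c := by
  rcases Nat.eq_zero_or_pos r with hr | hr
  · subst hr
    refine ⟨1, one_pos, 1, ?_⟩
    intro n hn c _
    exact (c s(⟨0, by omega⟩, ⟨0, by omega⟩)).elim0
  rcases Nat.eq_zero_or_pos t with ht | ht
  · subst ht
    refine ⟨1, one_pos, 0, ?_⟩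
    intro n _ c _
    refine ⟨r, Sym2.lift ⟨fun a b => min a b, fun a b => min_comm a b⟩,
      fun p => p.2.elim0, min_pattern r, ?_, ?_⟩
    · intro p q _
      exact p.2.elim0
    · intro p q _
      exact p.2.elim0
  exact main_machine r t hr ht
end

section
/- Every r-minimal graph has at most 2r vertices; consequently, for every r, t ∈ ℕ the family 𝓕ʳₜ of (r,t)-unavoidable graphs is finite. -/
/-- An edge-coloured complete graph on `Fin m` (with edge colouring
`χ' : Sym2 (Fin m) → Fin r`; the values on diagonal pairs are determined by
the colouring so we include them) is `(r,t)`-unavoidable if it is the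
`t`-blowup of some `r`-minimal graph: there is an `r`-minimal `χ` on `Fin v`
and an identification `Fin m ≃ Fin v × Fin t` under which `χ'` is the blowup
colouring of `χ`. -/
def IsUnavoidable (r t m : ℕ) (χ' : Sym2 (Fin m) → Fin r) : Prop :=
  ∃ (v : ℕ) (χ : Sym2 (Fin v) → Fin r) (eqv : Fin m ≃ Fin v × Fin t),
    IsRMinimal r v χ ∧
      ∀ e : Sym2 (Fin m), χ' e = χ (Sym2.map Prod.fst (Sym2.map eqv e))

/-- Every `r`-minimal graph has at most `2r` vertices; consequently, for every
`t`, the family `𝓕ʳₜ` of `(r,t)`-unavoidable graphs is finite. -/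
theorem rMinimal_card_le_and_unavoidable_finite (r : ℕ) :
    (∀ (v : ℕ) (χ : Sym2 (Fin v) → Fin r), IsRMinimal r v χ → v ≤ 2 * r) ∧
      ∀ t : ℕ,
        {x : Σ m : ℕ, Sym2 (Fin m) → Fin r | IsUnavoidable r t x.1 x.2}.Finite := by
  have part1 : ∀ (v : ℕ) (χ : Sym2 (Fin v) → Fin r), IsRMinimal r v χ → v ≤ 2 * r := by
    intro v χ ⟨h1, h2⟩
    have f : ∀ a : Fin v, ∃ k : Fin r,
        ∀ p ∈ Finset.univ.erase a, ∀ q ∈ Finset.univ.erase a, χ s(p, q) ≠ k := by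
      intro a
      apply h2
      intro h
      have ha : a ∈ Finset.univ.erase a := by rw [h]; exact Finset.mem_univ a
      simp at ha
    choose g hg using f
    have key : ∀ k ∈ Finset.univ.image g,
        (Finset.univ.filter fun a => g a = k).card ≤ 2 := by
      intro k _
      obtain ⟨x, y, hxy⟩ := h1 k
      have sub : (Finset.univ.filter fun a => g a = k) ⊆ {x, y} := by
        intro a ha
        simp only [Finset.mem_filter, Finset.mem_univ, true_and] at ha
        by_contra hax
        simp only [Finset.mem_insert, Finset.mem_singleton, not_or] at hax
        exact hg a x (by simp [Ne.symm hax.1]) y (by simp [Ne.symm hax.2]) (ha ▸ hxy)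
      calc (Finset.univ.filter fun a => g a = k).card ≤ ({x, y} : Finset (Fin v)).card :=
            Finset.card_le_card sub
        _ ≤ 2 := (Finset.card_insert_le _ _).trans (by simp)
    calc v = (Finset.univ : Finset (Fin v)).card := by simp
      _ ≤ 2 * (Finset.univ.image g).card := Finset.card_le_mul_card_image _ 2 key
      _ ≤ 2 * r := by
          have := Finset.card_le_univ (Finset.univ.image g)
          simp only [Finset.card_univ, Fintype.card_fin] at this
          omega
  refine ⟨part1, fun t => ?_⟩
  apply Set.Finite.subset (Set.Finite.biUnion (Set.finite_Iic (2 * r * t))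
    (fun m _ => (Set.finite_univ (α := Sym2 (Fin m) → Fin r)).image (Sigma.mk m)))
  rintro ⟨m, χ'⟩ hx
  obtain ⟨v, χ, eqv, hmin, -⟩ := hx
  have hm : m = v * t := by
    have := Fintype.card_congr eqv
    simpa using this
  simp only [Set.mem_iUnion]
  refine ⟨m, ?_, χ', trivial, rfl⟩
  have hv := part1 v χ hmin
  calc m = v * t := hm
    _ ≤ 2 * r * t := Nat.mul_le_mul_right t hv
end

section
/- Let G, H be graphs and r ≥ 2 an integer such that G →ᵣ H. Then there is a constant c = c(G, H, r) such that for every t ∈ ℕ, B(G →ᵣ H; t) ≤ cᵗ. -/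
/-- `Arrows G H r` : every `r`-colouring of the edges of `G` contains a
monochromatic copy of `H`. -/
def Arrows {α β : Type*} (G : SimpleGraph α) (H : SimpleGraph β) (r : ℕ) : Prop :=
  ∀ c : Sym2 α → Fin r, ∃ f : β → α, Function.Injective f ∧
    ∃ k : Fin r, ∀ u v : β, H.Adj u v → G.Adj (f u) (f v) ∧ c s(f u, f v) = k

/-- `HasMonoCanonCopy G H n t r c` : the colouring `c` of the edges of the
`n`-blowup `G[n]` contains a monochromatic canonical copy of the `t`-blowup
`H[t]`. -/
def HasMonoCanonCopy {α β : Type*} (G : SimpleGraph α) (H : SimpleGraph β)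
    (n t r : ℕ) (c : Sym2 (α × Fin n) → Fin r) : Prop :=
  ∃ f : β → α, Function.Injective f ∧
    ∃ g : β → Fin t → Fin n, (∀ u, Function.Injective (g u)) ∧
      ∃ k : Fin r, ∀ u v : β, H.Adj u v →
        G.Adj (f u) (f v) ∧ ∀ i j, c s((f u, g u i), (f v, g v j)) = k

/-- The blowup Ramsey number `B(G →ᵣ H; t)`: the least `n` such that every
`r`-colouring of the edges of `G[n]` contains a monochromatic canonical copy
of `H[t]`. -/
noncomputable def blowupRamsey {α β : Type*} (G : SimpleGraph α) (H : SimpleGraph β)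
    (r t : ℕ) : ℕ :=
  sInf {n : ℕ | ∀ c : Sym2 (α × Fin n) → Fin r, HasMonoCanonCopy G H n t r c}

section Souza

attribute [local instance] Classical.propDecidable

open Finset

variable {pG pH N r : ℕ}

/-- colour/adjacency goodness of a placement `x` for pattern `(f, k)`. -/
def GoodC (G : SimpleGraph (Fin pG)) (H : SimpleGraph (Fin pH))
    (c : Sym2 (Fin pG × Fin N) → Fin r) (f : Fin pH → Fin pG) (k : Fin r)
    (x : Fin pH → Fin N) : Prop :=
  ∀ u v, H.Adj u v → G.Adj (f u) (f v) ∧ c s((f u, x u), (f v, x v)) = k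

/-- the set of good placements inside the box `∏ v, S (f v)`. -/
noncomputable def goodSet (G : SimpleGraph (Fin pG)) (H : SimpleGraph (Fin pH))
    (c : Sym2 (Fin pG × Fin N) → Fin r) (f : Fin pH → Fin pG) (k : Fin r)
    (S : Fin pG → Finset (Fin N)) : Finset (Fin pH → Fin N) :=
  (Fintype.piFinset fun v => S (f v)).filter (GoodC G H c f k)

lemma supersat (G : SimpleGraph (Fin pG)) (H : SimpleGraph (Fin pH))
    (hGH : Arrows G H r) (c : Sym2 (Fin pG × Fin N) → Fin r) (hN : 0 < N)
    (S : Fin pG → Finset (Fin N)) (hS : ∀ a, (S a).Nonempty) :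
    ∃ (f : Fin pH → Fin pG) (k : Fin r), Function.Injective f ∧
      ∏ v, (S (f v)).card ≤
        Fintype.card ((Fin pH → Fin pG) × Fin r) * (goodSet G H c f k S).card := by
  classical
  set Q := ((Fin pH → Fin pG) × Fin r)
  set M := Fintype.card Q with hM
  set T : Finset (Fin pG → Fin N) := Fintype.piFinset S with hT
  have hTcard : T.card = ∏ a, (S a).card := Fintype.card_piFinset S
  have hTpos : 0 < T.card := by
    rw [hTcard]; exact Finset.prod_pos fun a _ => (hS a).card_pos
  -- pick a pattern for each transversal
  have hpick : ∀ y : Fin pG → Fin N, ∃ q : Q, Function.Injective q.1 ∧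
      GoodC G H c q.1 q.2 (fun v => y (q.1 v)) := by
    intro y
    obtain ⟨f, hf, k, hk⟩ := hGH (fun e => c (Sym2.map (fun a => (a, y a)) e))
    refine ⟨(f, k), hf, fun u v huv => ?_⟩
    simpa [Sym2.map_pair_eq] using hk u v huv
  choose F hFinj hFgood using hpick
  have hQne : Nonempty Q := by
    obtain ⟨y, hy⟩ := Finset.card_pos.mp hTpos
    exact ⟨F y⟩
  have hMpos : 0 < M := Fintype.card_pos
  -- pigeonhole: some pattern is picked by many transversals
  have hsum : T.card = ∑ q : Q, (T.filter fun y => F y = q).card :=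
    Finset.card_eq_sum_card_fiberwise fun y _ => Finset.mem_univ (F y)
  have hpigeon : ∃ q : Q, T.card ≤ M * (T.filter fun y => F y = q).card := by
    by_contra hcon
    push_neg at hcon
    have h1 : ∑ q : Q, M * (T.filter fun y => F y = q).card < ∑ _q : Q, T.card :=
      Finset.sum_lt_sum_of_nonempty Finset.univ_nonempty (fun q _ => hcon q)
    rw [← Finset.mul_sum, ← hsum, Finset.sum_const, Finset.card_univ, ← hM, smul_eq_mul] at h1
    exact absurd h1 (by omega)
  obtain ⟨q, hq⟩ := hpigeon
  set fb : Finset (Fin pG → Fin N) := T.filter fun y => F y = q with hfb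
  have hfbne : fb.Nonempty := by
    rw [← Finset.card_pos]
    nlinarith [hTpos]
  obtain ⟨y₀, hy₀⟩ := hfbne
  have hy₀q : F y₀ = q := (Finset.mem_filter.mp hy₀).2
  have hqinj : Function.Injective q.1 := hy₀q ▸ hFinj y₀
  refine ⟨q.1, q.2, hqinj, ?_⟩
  -- count the fiber: each element is determined by a good placement and its off-range part
  set d₀ : Fin N := ⟨0, hN⟩
  set img : Finset (Fin pG) := Finset.image q.1 Finset.univ with himg
  set S'' : Fin pG → Finset (Fin N) := fun a => if a ∈ img then {d₀} else S a with hS''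
  have hfibcount : fb.card ≤ (goodSet G H c q.1 q.2 S).card * ∏ a, (S'' a).card := by
    have := Finset.card_le_card_of_injOn
      (fun y => ((fun v => y (q.1 v)), fun a => if a ∈ img then d₀ else y a))
      (s := fb)
      (t := (goodSet G H c q.1 q.2 S) ×ˢ (Fintype.piFinset S'')) ?_ ?_
    · simpa [Fintype.card_piFinset] using this
    · intro y hy
      have hyT : y ∈ T := (Finset.mem_filter.mp hy).1
      have hyq : F y = q := (Finset.mem_filter.mp hy).2
      have hymem : ∀ a, y a ∈ S a := Fintype.mem_piFinset.mp hyT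
      refine Finset.mem_product.mpr ⟨?_, ?_⟩
      · refine Finset.mem_filter.mpr ⟨Fintype.mem_piFinset.mpr fun v => hymem (q.1 v), ?_⟩
        have := hFgood y
        rwa [hyq] at this
      · refine Fintype.mem_piFinset.mpr fun a => ?_
        by_cases ha : a ∈ img <;> simp [hS'', ha, hymem a]
    · intro y hy y' hy' heq
      simp only [Prod.mk.injEq] at heq
      funext a
      by_cases ha : a ∈ img
      · obtain ⟨v, _, hv⟩ := Finset.mem_image.mp ha
        have := congrFun heq.1 v
        rw [← hv]; exact this
      · have := congrFun heq.2 a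
        simpa [ha] using this
  -- split the full product
  have hsplit : ∏ a, (S a).card = (∏ v, (S (q.1 v)).card) * ∏ a, (S'' a).card := by
    have h1 : ∏ a, (S'' a).card =
        (∏ a ∈ Finset.univ.filter (· ∈ img), (1:ℕ)) *
          ∏ a ∈ Finset.univ.filter (¬ · ∈ img), (S a).card := by
      rw [← Finset.prod_filter_mul_prod_filter_not Finset.univ (· ∈ img)]
      congr 1
      · exact Finset.prod_congr rfl fun a ha => by
          simp [hS'', (Finset.mem_filter.mp ha).2]
      · exact Finset.prod_congr rfl fun a ha => by
          simp [hS'', (Finset.mem_filter.mp ha).2]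
    have h2 : ∏ v, (S (q.1 v)).card = ∏ a ∈ Finset.univ.filter (· ∈ img), (S a).card := by
      have himgeq : Finset.univ.filter (· ∈ img) = img := by
        ext a; simp
      rw [himgeq, himg, Finset.prod_image (fun x _ y _ h => hqinj h)]
    rw [h1, h2, Finset.prod_const_one, one_mul,
      Finset.prod_filter_mul_prod_filter_not Finset.univ (· ∈ img)]
  -- combine
  have hK : 0 < ∏ a, (S'' a).card := by
    refine Finset.prod_pos fun a _ => ?_
    by_cases ha : a ∈ img <;> simp [hS'', ha, (hS a).card_pos]
  have hchain : (∏ v, (S (q.1 v)).card) * ∏ a, (S'' a).card ≤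
      (M * (goodSet G H c q.1 q.2 S).card) * ∏ a, (S'' a).card := by
    calc (∏ v, (S (q.1 v)).card) * ∏ a, (S'' a).card = ∏ a, (S a).card := hsplit.symm
    _ = T.card := hTcard.symm
    _ ≤ M * fb.card := hq
    _ ≤ M * ((goodSet G H c q.1 q.2 S).card * ∏ a, (S'' a).card) :=
        Nat.mul_le_mul_left _ hfibcount
    _ = (M * (goodSet G H c q.1 q.2 S).card) * ∏ a, (S'' a).card := by ring
  exact Nat.le_of_mul_le_mul_right hchain hK

/-- the `v`-fiber of a good placement `x` : elements that can replace `x v`. -/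
noncomputable def fiberSet (G : SimpleGraph (Fin pG)) (H : SimpleGraph (Fin pH))
    (c : Sym2 (Fin pG × Fin N) → Fin r) (f : Fin pH → Fin pG) (k : Fin r)
    (S : Fin pG → Finset (Fin N)) (x : Fin pH → Fin N) (v : Fin pH) : Finset (Fin N) :=
  (S (f v)).filter fun w => GoodC G H c f k (Function.update x v w)

lemma cleaning (G : SimpleGraph (Fin pG)) (H : SimpleGraph (Fin pH))
    (c : Sym2 (Fin pG × Fin N) → Fin r) (f : Fin pH → Fin pG) (k : Fin r)
    (hpH : 0 < pH) (hN : 0 < N) (M : ℕ)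
    (S : Fin pG → Finset (Fin N)) (hS : ∀ a, (S a).Nonempty)
    (hgood : ∏ v, (S (f v)).card ≤ M * (goodSet G H c f k S).card) :
    ∃ x ∈ goodSet G H c f k S, ∀ v, (S (f v)).card ≤
      2 * pH * M * (fiberSet G H c f k S x v).card := by
  classical
  set D := 2 * pH * M with hD
  set good := goodSet G H c f k S with hgoodset
  set P := ∏ v, (S (f v)).card with hP
  have hPpos : 0 < P := Finset.prod_pos fun v _ => (hS (f v)).card_pos
  set bad : Fin pH → Finset (Fin pH → Fin N) := fun v =>
    good.filter fun x => D * (fiberSet G H c f k S x v).card < (S (f v)).card with hbad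
  set d₀ : Fin N := ⟨0, hN⟩
  have hmemS : ∀ x ∈ good, ∀ u, x u ∈ S (f u) := by
    intro x hx u
    exact Fintype.mem_piFinset.mp (Finset.mem_filter.mp hx).1 u
  -- per-direction counting: few placements have a sparse `v`-fiber
  have hkey : ∀ v, D * (bad v).card + 1 ≤ P := by
    intro v
    set Pv := ∏ u ∈ Finset.univ.erase v, (S (f u)).card with hPv
    have hPvsplit : (S (f v)).card * Pv = P :=
      Finset.mul_prod_erase Finset.univ (fun u => (S (f u)).card) (Finset.mem_univ v)
    have hPvpos : 0 < Pv := Finset.prod_pos fun u _ => (hS (f u)).card_pos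
    set Pi' : Finset (Fin pH → Fin N) :=
      Fintype.piFinset (fun u => if u = v then ({d₀} : Finset (Fin N)) else S (f u)) with hPi'
    have hPi'card : Pi'.card = Pv := by
      have h2 : ∏ u ∈ Finset.univ.erase v,
            ((if u = v then ({d₀} : Finset (Fin N)) else S (f u))).card
          = ∏ u ∈ Finset.univ.erase v, (S (f u)).card :=
        Finset.prod_congr rfl fun u hu => by rw [if_neg (Finset.mem_erase.mp hu).1]
      rw [hPi', Fintype.card_piFinset,
        ← Finset.mul_prod_erase Finset.univ
          (fun u => ((if u = v then ({d₀} : Finset (Fin N)) else S (f u))).card)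
          (Finset.mem_univ v), h2]
      simp [hPv]
    have hmaps : ∀ x ∈ bad v, Function.update x v d₀ ∈ Pi' := by
      intro x hx
      have hxg : x ∈ good := (Finset.mem_filter.mp hx).1
      refine Fintype.mem_piFinset.mpr fun u => ?_
      by_cases hu : u = v
      · subst hu; simp [Function.update_self]
      · rw [Function.update_of_ne hu, if_neg hu]
        exact hmemS x hxg u
    have hcount : (bad v).card =
        ∑ z ∈ Pi', ((bad v).filter fun x => Function.update x v d₀ = z).card :=
      Finset.card_eq_sum_card_fiberwise hmaps
    have hfiber : ∀ z ∈ Pi',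
        D * ((bad v).filter fun x => Function.update x v d₀ = z).card ≤
          (S (f v)).card - 1 := by
      intro z _
      set fib := (bad v).filter fun x => Function.update x v d₀ = z with hfib
      rcases fib.eq_empty_or_nonempty with he | ⟨x₀, hx₀⟩
      · rw [he]; simp
      · have hx₀b : x₀ ∈ bad v := (Finset.mem_filter.mp hx₀).1
        have hx₀g : x₀ ∈ good := (Finset.mem_filter.mp hx₀b).1
        have hx₀z : Function.update x₀ v d₀ = z := (Finset.mem_filter.mp hx₀).2
        have hoff : ∀ x ∈ fib, ∀ u, u ≠ v → x u = x₀ u := by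
          intro x hx u hu
          have hz : Function.update x v d₀ = z := (Finset.mem_filter.mp hx).2
          have := congrFun (hz.trans hx₀z.symm) u
          rwa [Function.update_of_ne hu, Function.update_of_ne hu] at this
        have heqx : ∀ x ∈ fib, Function.update x₀ v (x v) = x := by
          intro x hx
          funext u
          by_cases hu : u = v
          · subst hu; rw [Function.update_self]
          · rw [Function.update_of_ne hu, ← hoff x hx u hu]
        have hinj : fib.card ≤ (fiberSet G H c f k S x₀ v).card := by
          refine Finset.card_le_card_of_injOn (fun x => x v) ?_ ?_
          · intro x hx
            have hxg : x ∈ good := (Finset.mem_filter.mp (Finset.mem_filter.mp hx).1).1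
            refine Finset.mem_filter.mpr ⟨hmemS x hxg v, ?_⟩
            rw [heqx x hx]
            exact (Finset.mem_filter.mp hxg).2
          · intro x hx y hy hxy
            have hxy' : x v = y v := hxy
            rw [← heqx x (Finset.mem_coe.mp hx), ← heqx y (Finset.mem_coe.mp hy), hxy']
        have hx₀bad : D * (fiberSet G H c f k S x₀ v).card < (S (f v)).card :=
          (Finset.mem_filter.mp hx₀b).2
        have := Nat.mul_le_mul_left D hinj
        omega
    have : D * (bad v).card ≤ Pv * ((S (f v)).card - 1) := by
      rw [hcount, Finset.mul_sum]
      calc ∑ z ∈ Pi', D * ((bad v).filter fun x => Function.update x v d₀ = z).card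
          ≤ ∑ _z ∈ Pi', ((S (f v)).card - 1) := Finset.sum_le_sum hfiber
        _ = Pv * ((S (f v)).card - 1) := by rw [Finset.sum_const, hPi'card, smul_eq_mul]
    have hcv : 1 ≤ (S (f v)).card := (hS (f v)).card_pos
    have h2 : Pv * ((S (f v)).card - 1) + Pv = P := by
      rw [← hPvsplit]
      have : (S (f v)).card - 1 + 1 = (S (f v)).card := Nat.sub_add_cancel hcv
      calc Pv * ((S (f v)).card - 1) + Pv = Pv * ((S (f v)).card - 1 + 1) := by ring
        _ = Pv * (S (f v)).card := by rw [this]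
        _ = (S (f v)).card * Pv := Nat.mul_comm _ _
    omega
  -- union bound
  by_contra hcon
  push_neg at hcon
  have hsub : good ⊆ Finset.univ.biUnion bad := by
    intro x hx
    obtain ⟨v, hv⟩ := hcon x hx
    exact Finset.mem_biUnion.mpr ⟨v, Finset.mem_univ v, Finset.mem_filter.mpr ⟨hx, hv⟩⟩
  have hgsum : good.card ≤ ∑ v, (bad v).card :=
    le_trans (Finset.card_le_card hsub) Finset.card_biUnion_le
  have h2 : D * good.card ≤ ∑ v, D * (bad v).card := by
    rw [← Finset.mul_sum]
    exact Nat.mul_le_mul_left _ hgsum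
  have h4 : ∑ v, D * (bad v).card + pH ≤ pH * P := by
    have := Finset.sum_le_sum fun v (_ : v ∈ (Finset.univ : Finset (Fin pH))) => hkey v
    rw [Finset.sum_add_distrib, Finset.sum_const, Finset.card_univ, Fintype.card_fin,
      smul_eq_mul, mul_one] at this
    simpa using this
  have h5 : 2 * (pH * P) ≤ D * good.card := by
    calc 2 * (pH * P) ≤ 2 * (pH * (M * good.card)) := by
          have := Nat.mul_le_mul_left pH hgood
          omega
      _ = D * good.card := by rw [hD]; ring
  have : 1 ≤ pH * P := Nat.mul_pos hpH hPpos
  omega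


lemma step (G : SimpleGraph (Fin pG)) (H : SimpleGraph (Fin pH))
    (hGH : Arrows G H r) (c : Sym2 (Fin pG × Fin N) → Fin r)
    (hpH : 0 < pH) (hN : 0 < N)
    (S : Fin pG → Finset (Fin N)) (hS : ∀ a, (S a).Nonempty) :
    ∃ (f : Fin pH → Fin pG) (k : Fin r) (x : Fin pH → Fin N)
      (S' : Fin pG → Finset (Fin N)),
      Function.Injective f ∧ GoodC G H c f k x ∧ (∀ v, x v ∈ S (f v)) ∧
      (∀ a, S' a ⊆ S a) ∧
      (∀ a, (S a).card ≤
        2 * pH * Fintype.card ((Fin pH → Fin pG) × Fin r) * ((S' a).card + 1)) ∧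
      (∀ v w, w ∈ S' (f v) → GoodC G H c f k (Function.update x v w) ∧ w ≠ x v) := by
  classical
  set M := Fintype.card ((Fin pH → Fin pG) × Fin r) with hMdef
  obtain ⟨f, k, hfinj, hsup⟩ := supersat G H hGH c hN S hS
  obtain ⟨x, hxg, hfib⟩ := cleaning G H c f k hpH hN M S hS hsup
  have hMpos : 0 < M := @Fintype.card_pos _ _ ⟨((f, k) : (Fin pH → Fin pG) × Fin r)⟩
  have hxmem : ∀ v, x v ∈ S (f v) := fun v =>
    Fintype.mem_piFinset.mp (Finset.mem_filter.mp hxg).1 v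
  have hxgood : GoodC G H c f k x := (Finset.mem_filter.mp hxg).2
  set S' : Fin pG → Finset (Fin N) := fun a =>
    if h : ∃ v, f v = a then (fiberSet G H c f k S x h.choose).erase (x h.choose)
    else S a with hS'def
  have hS'v : ∀ v, S' (f v) = (fiberSet G H c f k S x v).erase (x v) := by
    intro v
    have h : ∃ u, f u = f v := ⟨v, rfl⟩
    have hch : h.choose = v := hfinj h.choose_spec
    rw [hS'def]
    dsimp only
    rw [dif_pos h, hch]
  have hxvfib : ∀ v, x v ∈ fiberSet G H c f k S x v := by
    intro v
    refine Finset.mem_filter.mpr ⟨hxmem v, ?_⟩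
    rw [Function.update_eq_self]
    exact hxgood
  refine ⟨f, k, x, S', hfinj, hxgood, hxmem, ?_, ?_, ?_⟩
  · -- subset
    intro a
    rw [hS'def]
    dsimp only
    by_cases h : ∃ v, f v = a
    · rw [dif_pos h]
      intro w hw
      have := Finset.mem_of_mem_filter w (Finset.mem_of_mem_erase hw)
      rwa [h.choose_spec] at this
    · rw [dif_neg h]
  · -- sizes
    intro a
    by_cases h : ∃ v, f v = a
    · obtain ⟨v, hv⟩ := h
      have h1 : S' a = (fiberSet G H c f k S x v).erase (x v) := by
        rw [← hv, hS'v v]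
      have h2 : ((fiberSet G H c f k S x v).erase (x v)).card + 1 =
          (fiberSet G H c f k S x v).card := by
        rw [Finset.card_erase_of_mem (hxvfib v)]
        have := Finset.card_pos.mpr ⟨x v, hxvfib v⟩
        omega
      rw [h1, h2, ← hv]
      exact hfib v
    · have h1 : S' a = S a := by rw [hS'def]; dsimp only; rw [dif_neg h]
      rw [h1]
      have h2 : 0 < 2 * pH * M := by positivity
      nlinarith [(S a).card.zero_le]
  · -- fiber property
    intro v w hw
    rw [hS'v v] at hw
    obtain ⟨hne, hmem⟩ := Finset.mem_erase.mp hw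
    exact ⟨(Finset.mem_filter.mp hmem).2, hne⟩


lemma iter (G : SimpleGraph (Fin pG)) (H : SimpleGraph (Fin pH))
    (hGH : Arrows G H r) (c : Sym2 (Fin pG × Fin N) → Fin r)
    (hpH : 0 < pH) (hN : 0 < N)
    (hM : 0 < Fintype.card ((Fin pH → Fin pG) × Fin r)) :
    ∀ (j : ℕ) (S : Fin pG → Finset (Fin N)),
      (∀ a, (2 * (2 * pH * Fintype.card ((Fin pH → Fin pG) × Fin r))) ^ j ≤ (S a).card) →
      ∃ (f : Fin j → Fin pH → Fin pG) (k : Fin j → Fin r) (x : Fin j → Fin pH → Fin N),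
        (∀ i, Function.Injective (f i)) ∧
        (∀ i, GoodC G H c (f i) (k i) (x i)) ∧
        (∀ i v, x i v ∈ S (f i v)) ∧
        (∀ i i' : Fin j, i < i' → ∀ v, f i v = f i' v →
          GoodC G H c (f i) (k i) (Function.update (x i) v (x i' v)) ∧ x i' v ≠ x i v) := by
  classical
  set M := Fintype.card ((Fin pH → Fin pG) × Fin r) with hMdef
  set D := 2 * pH * M with hDdef
  have hDpos : 0 < D := by
    rw [hDdef]; exact Nat.mul_pos (Nat.mul_pos two_pos hpH) hM
  intro j
  induction j with
  | zero =>
    intro S hSz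
    exact ⟨Fin.elim0, Fin.elim0, Fin.elim0,
      fun i => i.elim0, fun i => i.elim0, fun i => i.elim0, fun i => i.elim0⟩
  | succ j ih =>
    intro S hSz
    have hSne : ∀ a, (S a).Nonempty := by
      intro a
      have h1 : 0 < (2 * D) ^ (j + 1) := Nat.pow_pos (by omega)
      exact Finset.card_pos.mp (by have := hSz a; omega)
    obtain ⟨f₀, k₀, x₀, S', hf₀inj, hx₀good, hx₀mem, hsub, hsz, hfibprop⟩ :=
      step G H hGH c hpH hN S hSne
    have hS'z : ∀ a, (2 * D) ^ j ≤ (S' a).card := by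
      intro a
      have h1 : (2 * D) ^ (j + 1) = D * (2 * (2 * D) ^ j) := by rw [pow_succ]; ring
      have h2 : (2 * D) ^ (j + 1) ≤ D * ((S' a).card + 1) := le_trans (hSz a) (hsz a)
      rw [h1] at h2
      have h3 : 2 * (2 * D) ^ j ≤ (S' a).card + 1 := Nat.le_of_mul_le_mul_left h2 hDpos
      have h4 : 0 < (2 * D) ^ j := Nat.pow_pos (by omega)
      omega
    obtain ⟨ft, kt, xt, htinj, htgood, htmem, htcross⟩ := ih S' hS'z
    refine ⟨Fin.cons f₀ ft, Fin.cons k₀ kt, Fin.cons x₀ xt, ?_, ?_, ?_, ?_⟩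
    · intro i
      induction i using Fin.cases with
      | zero => simpa using hf₀inj
      | succ i => simpa using htinj i
    · intro i
      induction i using Fin.cases with
      | zero => simpa using hx₀good
      | succ i => simpa using htgood i
    · intro i v
      induction i using Fin.cases with
      | zero => simpa using hx₀mem v
      | succ i =>
        simp only [Fin.cons_succ]
        exact hsub _ (htmem i v)
    · intro i i' hlt v hfv
      induction i using Fin.cases with
      | zero =>
        induction i' using Fin.cases with
        | zero => exact absurd hlt (lt_irrefl _)
        | succ i₂ =>
          simp only [Fin.cons_zero, Fin.cons_succ] at hfv ⊢
          have hmem : xt i₂ v ∈ S' (f₀ v) := by rw [hfv]; exact htmem i₂ v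
          exact hfibprop v _ hmem
      | succ i₁ =>
        induction i' using Fin.cases with
        | zero => exact absurd hlt (by simp [Fin.lt_def])
        | succ i₂ =>
          simp only [Fin.cons_succ] at hfv ⊢
          exact htcross i₁ i₂ (Fin.succ_lt_succ_iff.mp hlt) v hfv


end Souza

/-- Souza's theorem: if `G →ᵣ H` with `r ≥ 2`, then there is a constant
`c = c(G, H, r)` such that `B(G →ᵣ H; t) ≤ cᵗ` for every `t`. -/
theorem souza_exponential_bound (pG pH : ℕ) (G : SimpleGraph (Fin pG))
    (H : SimpleGraph (Fin pH)) (r : ℕ) (hr : 2 ≤ r) (hGH : Arrows G H r) :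
    ∃ c : ℕ, ∀ t : ℕ, blowupRamsey G H r t ≤ c ^ t := by
  classical
  by_cases hpH0 : pH = 0
  · -- `H` has no vertices : everything is trivial
    subst hpH0
    refine ⟨1, fun t => ?_⟩
    have h0 : (0 : ℕ) ∈ {n : ℕ | ∀ c : Sym2 (Fin pG × Fin n) → Fin r,
        HasMonoCanonCopy G H n t r c} := by
      intro c
      exact ⟨Fin.elim0, fun {a} => a.elim0, fun u => u.elim0, fun u => u.elim0,
        ⟨0, by omega⟩, fun u => u.elim0⟩
    calc blowupRamsey G H r t ≤ 0 := Nat.sInf_le h0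
      _ ≤ 1 ^ t := Nat.zero_le _
  have hpH : 0 < pH := Nat.pos_of_ne_zero hpH0
  by_cases hpG0 : pG = 0
  · -- impossible : `Arrows` cannot hold
    subst hpG0
    obtain ⟨f, -, -⟩ := hGH (fun _ => (⟨0, by omega⟩ : Fin r))
    exact (f ⟨0, hpH⟩).elim0
  have hpG : 0 < pG := Nat.pos_of_ne_zero hpG0
  set M := Fintype.card ((Fin pH → Fin pG) × Fin r) with hMdef
  have hM : 0 < M :=
    @Fintype.card_pos _ _ ⟨((fun _ => ⟨0, hpG⟩ : Fin pH → Fin pG), ⟨0, by omega⟩)⟩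
  set D2 := 2 * (2 * pH * M) with hD2def
  have hD2 : 2 ≤ D2 := by
    have : 0 < 2 * pH * M := by positivity
    omega
  refine ⟨D2 ^ (2 * M), fun t => ?_⟩
  rcases Nat.eq_zero_or_pos t with ht | ht
  · -- t = 0
    subst ht
    have h1 : (1 : ℕ) ∈ {n : ℕ | ∀ c : Sym2 (Fin pG × Fin n) → Fin r,
        HasMonoCanonCopy G H n 0 r c} := by
      intro c
      obtain ⟨f, hfinj, k, hk⟩ :=
        hGH (fun e => c (Sym2.map (fun a => (a, (0 : Fin 1))) e))
      exact ⟨f, hfinj, fun _ => Fin.elim0, fun u i => i.elim0, k,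
        fun u v huv => ⟨(hk u v huv).1, fun i => i.elim0⟩⟩
    calc blowupRamsey G H r 0 ≤ 1 := Nat.sInf_le h1
      _ = (D2 ^ (2 * M)) ^ 0 := (pow_zero _).symm
  · -- t ≥ 1, the main case
    set L := M * t + 1 with hLdef
    set N := D2 ^ L with hNdef
    have hN : 0 < N := Nat.pow_pos (by omega)
    have hmem : N ∈ {n : ℕ | ∀ c : Sym2 (Fin pG × Fin n) → Fin r,
        HasMonoCanonCopy G H n t r c} := by
      intro c
      obtain ⟨f, k, x, hinj, hgood, hmemS, hcross⟩ :=
        iter G H hGH c hpH hN hM L (fun _ => Finset.univ)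
          (fun a => by
            rw [Finset.card_univ, Fintype.card_fin, hNdef, hD2def])
      -- pigeonhole : some pattern occurs at least t times
      have hpigeon : ∃ q : (Fin pH → Fin pG) × Fin r,
          t ≤ (Finset.univ.filter fun i : Fin L => (f i, k i) = q).card := by
        by_contra hcon
        push_neg at hcon
        have hsum : (Finset.univ : Finset (Fin L)).card =
            ∑ q : (Fin pH → Fin pG) × Fin r,
              (Finset.univ.filter fun i : Fin L => (f i, k i) = q).card :=
          Finset.card_eq_sum_card_fiberwise fun i _ => Finset.mem_univ _
        have hle : ∑ q : (Fin pH → Fin pG) × Fin r,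
            (Finset.univ.filter fun i : Fin L => (f i, k i) = q).card ≤
              ∑ _q : (Fin pH → Fin pG) × Fin r, (t - 1) :=
          Finset.sum_le_sum fun q _ => by have := hcon q; omega
        rw [Finset.sum_const, Finset.card_univ, ← hMdef, smul_eq_mul] at hle
        rw [Finset.card_univ, Fintype.card_fin] at hsum
        have h2 : M * (t - 1) + M = M * t := by
          have : t - 1 + 1 = t := Nat.sub_add_cancel ht
          calc M * (t - 1) + M = M * (t - 1 + 1) := by ring
            _ = M * t := by rw [this]
        omega
      obtain ⟨q, hq⟩ := hpigeon
      obtain ⟨I, hIsub, hIcard⟩ := Finset.exists_subset_card_eq hq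
      set σ : Fin t → Fin L := fun i => ((I.orderIsoOfFin hIcard i : I) : Fin L) with hσdef
      have hσmono : StrictMono σ := fun i j h => (I.orderIsoOfFin hIcard).strictMono h
      have hσI : ∀ i, σ i ∈ I := fun i => (I.orderIsoOfFin hIcard i).2
      have hfq : ∀ i, f (σ i) = q.1 ∧ k (σ i) = q.2 := by
        intro i
        have h := (Finset.mem_filter.mp (hIsub (hσI i))).2
        exact ⟨congrArg Prod.fst h, congrArg Prod.snd h⟩
      have i₀ : Fin t := ⟨0, ht⟩
      refine ⟨q.1, ?_, fun u i => x (σ i) u, ?_, q.2, ?_⟩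
      · rw [← (hfq i₀).1]; exact hinj (σ i₀)
      · -- injectivity of each part
        intro u i j hij
        rcases lt_trichotomy i j with h | h | h
        · exfalso
          have hlt := hσmono h
          have hfeq : f (σ i) u = f (σ j) u := by rw [(hfq i).1, (hfq j).1]
          exact (hcross (σ i) (σ j) hlt u hfeq).2 hij.symm
        · exact h
        · exfalso
          have hlt := hσmono h
          have hfeq : f (σ j) u = f (σ i) u := by rw [(hfq i).1, (hfq j).1]
          exact (hcross (σ j) (σ i) hlt u hfeq).2 hij
      · intro u v huv
        constructor
        · have := (hgood (σ i₀) u v huv).1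
          rwa [(hfq i₀).1] at this
        · intro i j
          show c s((q.1 u, x (σ i) u), (q.1 v, x (σ j) v)) = q.2
          rcases lt_trichotomy (σ i) (σ j) with h | h | h
          · have hfeq : f (σ i) v = f (σ j) v := by rw [(hfq i).1, (hfq j).1]
            have hG := (hcross (σ i) (σ j) h v hfeq).1 u v huv
            have h2 := hG.2
            rw [Function.update_self, Function.update_of_ne huv.ne] at h2
            rw [← (hfq i).1, ← (hfq i).2]
            exact h2
          · have h2 := (hgood (σ i) u v huv).2
            rw [← (hfq i).1, ← (hfq i).2, ← h]
            exact h2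
          · have hfeq : f (σ j) u = f (σ i) u := by rw [(hfq i).1, (hfq j).1]
            have hG := (hcross (σ j) (σ i) h u hfeq).1 u v huv
            have h2 := hG.2
            rw [Function.update_self, Function.update_of_ne huv.ne'] at h2
            rw [← (hfq j).1, ← (hfq j).2]
            exact h2
    calc blowupRamsey G H r t ≤ N := Nat.sInf_le hmem
      _ = D2 ^ (M * t + 1) := by rw [hNdef, hLdef]
      _ ≤ D2 ^ (2 * M * t) := Nat.pow_le_pow_right (by omega)
          (by
            have h1 : 1 ≤ M * t := Nat.mul_pos hM ht
            have h2 : 2 * M * t = M * t + M * t := by ring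
            omega)
      _ = (D2 ^ (2 * M)) ^ t := pow_mul _ _ _
end

section
/- For every ε > 0 and every t ∈ ℕ, there exists n(ε, t) ∈ ℕ such that for every n ≥ n(ε, t), every 2-colouring of the edges of the complete graph K_n in which each of the two colours appears on at least ε·(n choose 2) edges contains a (2,t)-unavoidable coloured K_{2t}. -/
/-- A monochromatic clique predicate. -/
def MonoClique {n : ℕ} (c : Sym2 (Fin n) → Fin 2) (k : Fin 2) (S : Finset (Fin n)) : Prop :=
  ∀ x ∈ S, ∀ y ∈ S, x ≠ y → c s(x, y) = k

lemma ramsey2 (a b : ℕ) : ∃ R : ℕ, ∀ (n : ℕ) (c : Sym2 (Fin n) → Fin 2) (V : Finset (Fin n)),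
    R ≤ V.card →
    (∃ M ⊆ V, M.card = a ∧ MonoClique c 0 M) ∨ (∃ M ⊆ V, M.card = b ∧ MonoClique c 1 M) := by
  induction a generalizing b with
  | zero => exact ⟨0, fun n c V _ => Or.inl ⟨∅, Finset.empty_subset _, rfl, by simp [MonoClique]⟩⟩
  | succ a iha =>
    induction b with
    | zero => exact ⟨0, fun n c V _ => Or.inr ⟨∅, Finset.empty_subset _, rfl, by simp [MonoClique]⟩⟩
    | succ b ihb =>
      obtain ⟨R₁, h₁⟩ := iha (b + 1)
      obtain ⟨R₂, h₂⟩ := ihb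
      refine ⟨R₁ + R₂ + 1, fun n c V hV => ?_⟩
      have hVne : V.Nonempty := Finset.card_pos.mp (by omega)
      obtain ⟨v, hv⟩ := hVne
      set N₀ := (V.erase v).filter (fun x => c s(v, x) = 0) with hN₀
      set N₁ := (V.erase v).filter (fun x => c s(v, x) = 1) with hN₁
      have hcover : (V.erase v).card ≤ N₀.card + N₁.card := by
        rw [hN₀, hN₁, ← Finset.card_filter_add_card_filter_not
          (s := V.erase v) (p := fun x => c s(v, x) = 0)]
        gcongr
        exact fun hx => by omega
      have hcard : R₁ + R₂ ≤ N₀.card + N₁.card := by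
        have := Finset.card_erase_of_mem hv
        omega
      have key : ∀ (k : Fin 2) (N : Finset (Fin n)), N = (V.erase v).filter (fun x => c s(v, x) = k) →
          ∀ M ⊆ N, MonoClique c k M → MonoClique c k (insert v M) := by
        intro k N hN M hM hMc x hx y hy hxy
        simp only [Finset.mem_insert] at hx hy
        rcases hx with rfl | hx
        · rcases hy with rfl | hy
          · exact absurd rfl hxy
          · have := hM hy; rw [hN] at this; simp only [Finset.mem_filter] at this
            exact this.2
        · rcases hy with rfl | hy
          · have := hM hx; rw [hN] at this; simp only [Finset.mem_filter] at this
            rw [Sym2.eq_swap]; exact this.2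
          · exact hMc x hx y hy hxy
      rcases le_or_gt R₁ N₀.card with h | h
      · rcases h₁ n c N₀ h with ⟨M, hM, hMcard, hMc⟩ | ⟨M, hM, hMcard, hMc⟩
        · have hvM : v ∉ M := fun hvm => (Finset.notMem_erase v V) (Finset.mem_of_mem_filter _ (hM hvm))
          refine Or.inl ⟨insert v M, ?_, by rw [Finset.card_insert_of_notMem hvM, hMcard], key 0 N₀ rfl M hM hMc⟩
          intro x hx
          rcases Finset.mem_insert.mp hx with rfl | hx
          · exact hv
          · exact Finset.mem_of_mem_erase (Finset.mem_of_mem_filter _ (hM hx))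
        · exact Or.inr ⟨M, hM.trans ((Finset.filter_subset _ _).trans (Finset.erase_subset _ _)), hMcard, hMc⟩
      · have h2 : R₂ ≤ N₁.card := by omega
        rcases h₂ n c N₁ h2 with ⟨M, hM, hMcard, hMc⟩ | ⟨M, hM, hMcard, hMc⟩
        · exact Or.inl ⟨M, hM.trans ((Finset.filter_subset _ _).trans (Finset.erase_subset _ _)), hMcard, hMc⟩
        · have hvM : v ∉ M := fun hvm => (Finset.notMem_erase v V) (Finset.mem_of_mem_filter _ (hM hvm))
          refine Or.inr ⟨insert v M, ?_, by rw [Finset.card_insert_of_notMem hvM, hMcard], key 1 N₁ rfl M hM hMc⟩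
          intro x hx
          rcases Finset.mem_insert.mp hx with rfl | hx
          · exact hv
          · exact Finset.mem_of_mem_erase (Finset.mem_of_mem_filter _ (hM hx))


lemma kst (t : ℕ) (ht : 1 ≤ t) (δ : ℝ) (hδ : 0 < δ) :
    ∃ m₀ : ℕ, t + 1 ≤ m₀ ∧ ∀ (n : ℕ) (c : Sym2 (Fin n) → Fin 2) (k : Fin 2)
      (X Y : Finset (Fin n)) (m : ℕ), m₀ ≤ m → X.card = m → Y.card = m →
      δ * (m : ℝ) ^ 2 ≤ (((X ×ˢ Y).filter fun p => c s(p.1, p.2) = k).card : ℝ) →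
      ∃ A B : Finset (Fin n), A ⊆ X ∧ B ⊆ Y ∧ A.card = t ∧ B.card = t ∧
        ∀ a ∈ A, ∀ b ∈ B, c s(a, b) = k := by
  obtain ⟨n₁, hn₁⟩ := exists_nat_ge ((4 * t + 4 : ℝ) / δ)
  obtain ⟨n₂, hn₂⟩ := exists_nat_ge ((t : ℝ) ^ (t + 1) * (2 / δ) * (4 / δ) ^ t)
  refine ⟨max (max n₁ n₂ + 1) (t + 1), le_max_right _ _, ?_⟩
  intro n c k X Y m hm hX hY hE
  by_contra hno
  push_neg at hno
  have hmt : t + 1 ≤ m := le_trans (le_max_right _ _) hm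
  have hmn₁ : n₁ ≤ m := by
    have := le_trans (le_max_left _ _) hm; omega
  have hmn₂ : n₂ + 1 ≤ m := by
    have := le_trans (le_max_left _ _) hm; omega
  have hmpos : 0 < m := by omega
  have hmR : (0 : ℝ) < m := by exact_mod_cast hmpos
  have hδm : 4 * (t : ℝ) + 4 ≤ δ * m := by
    rw [div_le_iff₀ hδ] at hn₁
    calc (4 * (t : ℝ) + 4) ≤ n₁ * δ := hn₁
    _ ≤ m * δ := by gcongr <;> exact_mod_cast hmn₁
    _ = δ * m := by ring
  set d : ℕ := ⌈δ * m / 2⌉₊ with hd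
  have hdR : δ * m / 2 ≤ (d : ℝ) := Nat.le_ceil _
  have hd_ge : 2 * t + 2 ≤ d := by
    have h1 : ((2 * t + 2 : ℕ) : ℝ) ≤ (d : ℝ) := by
      refine le_trans ?_ hdR; push_cast; linarith
    exact_mod_cast h1
  set deg : Fin n → ℕ := fun b => (X.filter fun a => c s(a, b) = k).card with hdeg
  set H : Finset (Fin n) := Y.filter fun b => d ≤ deg b with hH
  set Yr : Finset (Fin n) := Y.filter fun b => ¬ d ≤ deg b with hYr
  -- edge count = sum of degrees
  have hEsum : ((X ×ˢ Y).filter fun p => c s(p.1, p.2) = k).card = ∑ b ∈ Y, deg b := by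
    rw [Finset.card_eq_sum_card_fiberwise (f := Prod.snd) (t := Y)
      (fun p hp => (Finset.mem_product.mp (Finset.mem_of_mem_filter _ hp)).2)]
    refine Finset.sum_congr rfl fun b hb => ?_
    refine Finset.card_bij' (fun p _ => p.1) (fun a _ => (a, b)) ?_ ?_ ?_ ?_
    · intro p hp
      simp only [Finset.mem_filter, Finset.mem_product, hdeg] at hp ⊢
      obtain ⟨⟨⟨h1, _⟩, h3⟩, h4⟩ := hp
      exact ⟨h1, by rw [← h4]; exact h3⟩
    · intro a ha
      simp only [Finset.mem_filter, Finset.mem_product, hdeg] at ha ⊢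
      exact ⟨⟨⟨ha.1, hb⟩, ha.2⟩, trivial⟩
    · intro p hp
      simp only [Finset.mem_filter] at hp
      exact Prod.ext rfl hp.2.symm
    · intro a ha; rfl
  -- lower bound on H.card
  have hHlow : δ * m / 2 ≤ (H.card : ℝ) := by
    have hsplit : ∑ b ∈ Y, deg b = ∑ b ∈ H, deg b + ∑ b ∈ Yr, deg b := by
      rw [hH, hYr]; exact (Finset.sum_filter_add_sum_filter_not Y _ _).symm
    have h1 : (∑ b ∈ H, deg b) ≤ H.card * m := by
      rw [← smul_eq_mul]
      apply Finset.sum_le_card_nsmul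
      intro b _
      rw [← hX]; exact Finset.card_le_card (Finset.filter_subset _ _)
    have h2 : ((∑ b ∈ Yr, deg b : ℕ) : ℝ) ≤ (m : ℝ) * (δ * m / 2) := by
      push_cast
      calc ∑ b ∈ Yr, (deg b : ℝ) ≤ Yr.card • (δ * m / 2) := by
            apply Finset.sum_le_card_nsmul
            intro b hb
            rw [hYr] at hb
            simp only [Finset.mem_filter, not_le] at hb
            have := (Nat.lt_ceil).mp hb.2
            exact le_of_lt this
      _ ≤ (m : ℝ) * (δ * m / 2) := by
          rw [nsmul_eq_mul]
          have hc : Yr.card ≤ m := by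
            rw [← hY, hYr]; exact Finset.card_le_card (Finset.filter_subset _ _)
          have hdm2 : (0 : ℝ) ≤ δ * m / 2 := by positivity
          gcongr <;> exact_mod_cast hc
    have hEc : δ * (m : ℝ) ^ 2 ≤ (H.card : ℝ) * m + (m : ℝ) * (δ * m / 2) := by
      have e0 : ((∑ b ∈ Y, deg b : ℕ) : ℝ)
          = ((∑ b ∈ H, deg b : ℕ) : ℝ) + ((∑ b ∈ Yr, deg b : ℕ) : ℝ) := by
        rw [hsplit]; push_cast; ring
      have e2 : ((∑ b ∈ H, deg b : ℕ) : ℝ) ≤ (H.card : ℝ) * m := by exact_mod_cast h1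
      have : δ * (m : ℝ) ^ 2 ≤ ((∑ b ∈ Y, deg b : ℕ) : ℝ) := by rw [← hEsum]; exact hE
      linarith
    nlinarith [hEc, hmR]
  -- double counting set
  set P : Finset (Finset (Fin n) × Fin n) :=
    ((X.powersetCard t) ×ˢ H).filter (fun q => ∀ a ∈ q.1, c s(a, q.2) = k) with hP
  have hPlow : H.card * d.choose t ≤ P.card := by
    rw [Finset.card_eq_sum_card_fiberwise (f := Prod.snd) (t := H)
      (fun q hq => (Finset.mem_product.mp (Finset.mem_of_mem_filter _ hq)).2)]
    calc H.card * d.choose t = ∑ _b ∈ H, d.choose t := by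
          rw [Finset.sum_const, smul_eq_mul]
    _ ≤ ∑ b ∈ H, (P.filter fun q => q.2 = b).card := by
        apply Finset.sum_le_sum
        intro b hb
        have hfib : (P.filter fun q => q.2 = b).card
            = ((X.filter fun a => c s(a, b) = k).powersetCard t).card := by
          refine Finset.card_bij' (fun q _ => q.1) (fun S _ => (S, b)) ?_ ?_ ?_ ?_
          · intro q hq
            simp only [hP, Finset.mem_filter, Finset.mem_product,
              Finset.mem_powersetCard] at hq ⊢
            obtain ⟨⟨⟨⟨hq1, hq2⟩, _⟩, hq3⟩, hq4⟩ := hq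
            refine ⟨fun a hA => Finset.mem_filter.mpr ⟨hq1 hA, ?_⟩, hq2⟩
            rw [← hq4]; exact hq3 a hA
          · intro S hS
            simp only [hP, Finset.mem_filter, Finset.mem_product,
              Finset.mem_powersetCard] at hS ⊢
            refine ⟨⟨⟨⟨fun a hA => (Finset.mem_filter.mp (hS.1 hA)).1, hS.2⟩, hb⟩,
              fun a hA => (Finset.mem_filter.mp (hS.1 hA)).2⟩, trivial⟩
          · intro q hq
            simp only [Finset.mem_filter] at hq
            exact Prod.ext rfl hq.2.symm
          · intro S hS; rfl
        rw [hfib, Finset.card_powersetCard]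
        apply Nat.choose_le_choose
        rw [hH] at hb
        exact (Finset.mem_filter.mp hb).2
  have hPup : P.card ≤ m.choose t * (t - 1) := by
    rw [Finset.card_eq_sum_card_fiberwise (f := Prod.fst) (t := X.powersetCard t)
      (fun q hq => (Finset.mem_product.mp (Finset.mem_of_mem_filter _ hq)).1)]
    calc ∑ S ∈ X.powersetCard t, (P.filter fun q => q.1 = S).card
        ≤ (X.powersetCard t).card * (t - 1) := by
          rw [← smul_eq_mul]
          apply Finset.sum_le_card_nsmul
          intro S hS
          obtain ⟨hSX, hScard⟩ := Finset.mem_powersetCard.mp hS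
          set YS := Y.filter fun b => ∀ a ∈ S, c s(a, b) = k with hYS
          have hinj : (P.filter fun q => q.1 = S).card ≤ YS.card := by
            apply Finset.card_le_card_of_injOn (fun q => q.2)
            · intro q hq
              simp only [hP, Finset.mem_coe, Finset.mem_filter, Finset.mem_product] at hq
              obtain ⟨⟨⟨_, hq2⟩, hq3⟩, hq4⟩ := hq
              rw [hH] at hq2
              refine Finset.mem_filter.mpr ⟨(Finset.mem_filter.mp hq2).1, ?_⟩
              intro a hA; exact hq3 a (hq4 ▸ hA)
            · intro q hq q' hq' heq
              simp only [Finset.coe_filter, Set.mem_setOf_eq] at hq hq'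
              exact Prod.ext (hq.2.trans hq'.2.symm) heq
          have hYScard : YS.card ≤ t - 1 := by
            by_contra hc
            have htY : t ≤ YS.card := by omega
            obtain ⟨B, hBYS, hBcard⟩ := Finset.exists_subset_card_eq htY
            obtain ⟨a, hA, b, hB, hne⟩ :=
              hno S B hSX (hBYS.trans (Finset.filter_subset _ _)) hScard hBcard
            exact hne ((Finset.mem_filter.mp (hBYS hB)).2 a hA)
          omega
    _ = m.choose t * (t - 1) := by rw [Finset.card_powersetCard, hX]
  -- combine into real inequality and contradict
  have hmain : (H.card : ℝ) * (d.choose t : ℝ) ≤ (m.choose t : ℝ) * ((t - 1 : ℕ) : ℝ) := by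
    exact_mod_cast hPlow.trans hPup
  have hfpos : (0 : ℝ) < (t.factorial : ℝ) := by exact_mod_cast Nat.factorial_pos t
  have hchoose_d : ((δ * m / 4) ^ t : ℝ) / (t.factorial : ℝ) ≤ (d.choose t : ℝ) := by
    refine le_trans ?_ (Nat.pow_le_choose t d)
    have hsub : ((d + 1 - t : ℕ) : ℝ) = (d : ℝ) + 1 - t := by
      have hle : t ≤ d + 1 := by omega
      push_cast [Nat.cast_sub hle]; ring
    have h2t : 2 * (t : ℝ) + 2 ≤ (d : ℝ) := by exact_mod_cast hd_ge
    have hle2 : δ * m / 4 ≤ ((d + 1 - t : ℕ) : ℝ) := by rw [hsub]; linarith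
    have hpow : (δ * ↑m / 4) ^ t ≤ (((d + 1 - t : ℕ) : ℝ)) ^ t :=
      pow_le_pow_left₀ (by positivity) hle2 t
    exact div_le_div_of_nonneg_right hpow hfpos.le
  have hchoose_m : (m.choose t : ℝ) ≤ (m : ℝ) ^ t := by
    calc (m.choose t : ℝ) ≤ ((m ^ t : ℕ) : ℝ) := by exact_mod_cast Nat.choose_le_pow m t
    _ = (m : ℝ) ^ t := by push_cast; ring
  have hfact : (t.factorial : ℝ) ≤ (t : ℝ) ^ t := by exact_mod_cast Nat.factorial_le_pow t
  have htm1 : ((t - 1 : ℕ) : ℝ) ≤ (t : ℝ) := by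
    have : (t - 1 : ℕ) ≤ t := Nat.sub_le _ _
    exact_mod_cast this
  have hchain : (δ * m / 2) * ((δ * m / 4) ^ t / (t.factorial : ℝ)) ≤ (m : ℝ) ^ t * t := by
    calc (δ * m / 2) * ((δ * m / 4) ^ t / (t.factorial : ℝ))
        ≤ (H.card : ℝ) * (d.choose t : ℝ) := by
          apply mul_le_mul hHlow hchoose_d (by positivity) (by positivity)
    _ ≤ (m.choose t : ℝ) * ((t - 1 : ℕ) : ℝ) := hmain
    _ ≤ (m : ℝ) ^ t * t := by
        apply mul_le_mul hchoose_m htm1 (by positivity) (by positivity)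
  have hmt_pos : (0 : ℝ) < (m : ℝ) ^ t := by positivity
  have hsimp : (δ / 2) * ((δ / 4) ^ t) * m ≤ (t : ℝ) ^ (t + 1) := by
    have expand : (δ * m / 2) * ((δ * m / 4) ^ t) = (δ / 2) * ((δ / 4) ^ t) * m * (m : ℝ) ^ t := by
      rw [show δ * (m : ℝ) / 4 = (δ / 4) * m by ring, mul_pow]; ring
    have h1 : (δ * m / 2) * ((δ * m / 4) ^ t) ≤ (m : ℝ) ^ t * t * (t.factorial : ℝ) := by
      have h := mul_le_mul_of_nonneg_right hchain (le_of_lt hfpos)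
      calc (δ * m / 2) * ((δ * m / 4) ^ t)
          = (δ * m / 2) * ((δ * m / 4) ^ t / (t.factorial : ℝ)) * (t.factorial : ℝ) := by
            field_simp
      _ ≤ _ := h
    have h2 : (m : ℝ) ^ t * t * (t.factorial : ℝ) ≤ (m : ℝ) ^ t * ((t : ℝ) ^ (t + 1)) := by
      calc (m : ℝ) ^ t * t * (t.factorial : ℝ) ≤ (m : ℝ) ^ t * t * (t : ℝ) ^ t := by
            apply mul_le_mul_of_nonneg_left hfact (by positivity)
      _ = (m : ℝ) ^ t * ((t : ℝ) ^ (t + 1)) := by ring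
    rw [expand] at h1
    have h3 := h1.trans h2
    calc (δ / 2) * ((δ / 4) ^ t) * m
        = ((δ / 2) * ((δ / 4) ^ t) * m * (m : ℝ) ^ t) / (m : ℝ) ^ t := by field_simp
    _ ≤ ((m : ℝ) ^ t * ((t : ℝ) ^ (t + 1))) / (m : ℝ) ^ t := by gcongr
    _ = (t : ℝ) ^ (t + 1) := by field_simp
  have hinv : (δ / 2) * ((δ / 4) ^ t) * ((2 / δ) * (4 / δ) ^ t) = 1 := by
    have h4 : (δ / 4) * (4 / δ) = 1 := by field_simp
    have h2 : (δ / 2) * (2 / δ) = 1 := by field_simp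
    calc (δ / 2) * ((δ / 4) ^ t) * ((2 / δ) * (4 / δ) ^ t)
        = ((δ / 2) * (2 / δ)) * (((δ / 4) * (4 / δ)) ^ t) := by rw [mul_pow]; ring
    _ = 1 := by rw [h4, h2, one_pow, mul_one]
  have hmle : (m : ℝ) ≤ (t : ℝ) ^ (t + 1) * (2 / δ) * (4 / δ) ^ t := by
    have hpos2 : (0 : ℝ) < (2 / δ) * (4 / δ) ^ t := by positivity
    have h := mul_le_mul_of_nonneg_right hsimp (le_of_lt hpos2)
    calc (m : ℝ) = (δ / 2) * ((δ / 4) ^ t) * m * ((2 / δ) * (4 / δ) ^ t) := by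
          rw [mul_comm ((δ / 2) * ((δ / 4) ^ t)) (m : ℝ), mul_assoc, hinv, mul_one]
    _ ≤ (t : ℝ) ^ (t + 1) * ((2 / δ) * (4 / δ) ^ t) := h
    _ = (t : ℝ) ^ (t + 1) * (2 / δ) * (4 / δ) ^ t := by ring
  have h5 : (m : ℝ) ≤ n₂ := hmle.trans hn₂
  have h6 : m ≤ n₂ := by exact_mod_cast h5
  omega



lemma packing {n : ℕ} (c : Sym2 (Fin n) → Fin 2) (k : Fin 2) (m R : ℕ) (hm : 0 < m)
    (hex : ∀ V : Finset (Fin n), R ≤ V.card → ∃ D ⊆ V, D.card = m ∧ MonoClique c k D)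
    (V : Finset (Fin n)) :
    ∃ (q : ℕ) (D : Fin q → Finset (Fin n)),
      (∀ i, D i ⊆ V) ∧ (∀ i, (D i).card = m) ∧ (∀ i, MonoClique c k (D i)) ∧
      (∀ i j, i ≠ j → Disjoint (D i) (D j)) ∧ (V \ Finset.univ.biUnion D).card < R := by
  induction V using Finset.strongInduction with
  | _ V ih =>
    by_cases hV : R ≤ V.card
    · obtain ⟨D₀, hD₀V, hD₀card, hD₀c⟩ := hex V hV
      have hne : D₀.Nonempty := Finset.card_pos.mp (by omega)
      have hss : V \ D₀ ⊂ V := Finset.sdiff_ssubset hD₀V hne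
      obtain ⟨q, D', h1, h2, h3, h4, h5⟩ := ih (V \ D₀) hss
      refine ⟨q + 1, Fin.cons D₀ D', ?_, ?_, ?_, ?_, ?_⟩
      · intro i
        refine Fin.cases ?_ ?_ i
        · simpa using hD₀V
        · intro j; simpa using (h1 j).trans (Finset.sdiff_subset)
      · intro i
        refine Fin.cases ?_ ?_ i
        · simpa using hD₀card
        · intro j; simpa using h2 j
      · intro i
        refine Fin.cases ?_ ?_ i
        · simpa using hD₀c
        · intro j; simpa using h3 j
      · intro i j
        refine Fin.cases ?_ (fun i' => ?_) i
        · refine Fin.cases ?_ (fun j' => ?_) j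
          · intro h; exact absurd rfl h
          · intro _
            simp only [Fin.cons_zero, Fin.cons_succ]
            exact Finset.disjoint_of_subset_right (h1 j') Finset.disjoint_sdiff
        · refine Fin.cases ?_ (fun j' => ?_) j
          · intro _
            simp only [Fin.cons_zero, Fin.cons_succ]
            exact Finset.disjoint_of_subset_left (h1 i') Finset.sdiff_disjoint
          · intro hij
            simp only [Fin.cons_succ]
            exact h4 i' j' (fun hh => hij (by rw [hh]))
      · have hbi : Finset.univ.biUnion (Fin.cons D₀ D' : Fin (q+1) → Finset (Fin n))
            = D₀ ∪ Finset.univ.biUnion D' := by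
          ext x
          simp only [Finset.mem_biUnion, Finset.mem_union, Finset.mem_univ, true_and]
          constructor
          · rintro ⟨i, hi⟩
            revert hi
            refine Fin.cases ?_ (fun i' => ?_) i
            · intro h0; exact Or.inl (by simpa using h0)
            · intro hi'; exact Or.inr ⟨i', by simpa using hi'⟩
          · rintro (hx | ⟨i, hi⟩)
            · exact ⟨0, by simpa using hx⟩
            · exact ⟨i.succ, by simpa using hi⟩
        rw [hbi]
        have heq : V \ (D₀ ∪ Finset.univ.biUnion D') = (V \ D₀) \ Finset.univ.biUnion D' := by
          ext x; simp only [Finset.mem_sdiff, Finset.mem_union]; tauto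
        rw [heq]; exact h5
    · refine ⟨0, (Fin.elim0 : Fin 0 → Finset (Fin n)), fun i => i.elim0, fun i => i.elim0, fun i => i.elim0,
        fun i => i.elim0, ?_⟩
      have hbz : (Finset.univ : Finset (Fin 0)).biUnion (Fin.elim0 : Fin 0 → Finset (Fin n)) = ∅ := by simp
      rw [hbz, Finset.sdiff_empty]
      omega


lemma sym2_sort {n : ℕ} (e : Sym2 (Fin n)) : s(e.inf, e.sup) = e := by
  induction e using Sym2.ind with
  | _ x y =>
    rcases le_total x y with h | h
    · simp [inf_eq_left.mpr h, sup_eq_right.mpr h]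
    · rw [Sym2.inf_mk, Sym2.sup_mk, inf_eq_right.mpr h, sup_eq_left.mpr h]
      exact Sym2.eq_swap
lemma ncard_le_pairs {n : ℕ} (c : Sym2 (Fin n) → Fin 2) (k : Fin 2) :
    {e : Sym2 (Fin n) | ¬ e.IsDiag ∧ c e = k}.ncard ≤
      ((Finset.univ : Finset (Fin n × Fin n)).filter
        (fun p => p.1 ≠ p.2 ∧ c s(p.1, p.2) = k)).card := by
  classical
  rw [Set.ncard_eq_toFinset_card']
  apply Finset.card_le_card_of_injOn (fun e => (e.inf, e.sup))
  · intro e he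
    simp only [Finset.mem_coe, Set.mem_toFinset, Set.mem_setOf_eq] at he
    simp only [Finset.mem_coe, Finset.mem_filter, Finset.mem_univ, true_and]
    constructor
    · intro hcontra
      apply he.1
      rw [← sym2_sort e, hcontra]
      exact Sym2.isDiag_iff_proj_eq |>.mpr rfl
    · rw [show s(e.inf, e.sup) = e from sym2_sort e]
      exact he.2
  · intro e he e' he' heq
    have h1 : e.inf = e'.inf := congrArg Prod.fst heq
    have h2 : e.sup = e'.sup := congrArg Prod.snd heq
    rw [← sym2_sort e, ← sym2_sort e', h1, h2]


/-- `ContainsUnavoidablePair t n c` : the `2`-edge-coloured complete graph on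
`Fin n` with colouring `c` contains a `(2,t)`-unavoidable coloured `K_{2t}`:
two disjoint `t`-sets `A`, `B`, with all edges inside `A` of colour `k₁`, all
edges inside `B` of colour `k₂`, all edges between `A` and `B` of colour `k₃`,
and not all of `k₁, k₂, k₃` equal (this is exactly a `t`-blowup of a
`2`-minimal graph, equivalently one of the colours induces on `A ∪ B` either a
clique on `t` vertices or two vertex-disjoint cliques on `t` vertices). -/
def ContainsUnavoidablePair (t n : ℕ) (c : Sym2 (Fin n) → Fin 2) : Prop :=
  ∃ (A B : Finset (Fin n)) (k₁ k₂ k₃ : Fin 2),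
    Disjoint A B ∧ A.card = t ∧ B.card = t ∧ ¬(k₁ = k₂ ∧ k₂ = k₃) ∧
    (∀ a ∈ A, ∀ b ∈ A, a ≠ b → c s(a, b) = k₁) ∧
    (∀ a ∈ B, ∀ b ∈ B, a ≠ b → c s(a, b) = k₂) ∧
    (∀ a ∈ A, ∀ b ∈ B, c s(a, b) = k₃)

set_option maxHeartbeats 1000000 in
/-- The Cutler–Montágh theorem: for every `ε > 0` and `t` there is `n(ε, t)`
such that for every `n ≥ n(ε, t)`, every `2`-colouring of the edges of `K_n`
in which each colour appears on at least `ε·(n choose 2)` edges contains a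
`(2,t)`-unavoidable coloured `K_{2t}`. -/
theorem cutler_montagh (ε : ℝ) (hε : 0 < ε) (t : ℕ) :
    ∃ n₀ : ℕ, ∀ n : ℕ, n₀ ≤ n →
      ∀ c : Sym2 (Fin n) → Fin 2,
        (∀ k : Fin 2,
          ε * (n.choose 2 : ℝ) ≤
            ({e : Sym2 (Fin n) | ¬ e.IsDiag ∧ c e = k}.ncard : ℝ)) →
        ContainsUnavoidablePair t n c := by
  classical
  rcases Nat.eq_zero_or_pos t with rfl | ht
  · refine ⟨0, fun n _ c _ => ⟨∅, ∅, 0, 1, 0, by simp, rfl, rfl, by decide, ?_, ?_, ?_⟩⟩ <;>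
      simp
  obtain ⟨mh, hmht, hmh⟩ := kst t ht (1/2) (by norm_num)
  obtain ⟨me, hmet, hme⟩ := kst t ht (ε/4) (by positivity)
  set m : ℕ := max mh me with hm
  have hmpos : 0 < m := by
    have := hmht; omega
  obtain ⟨R, hR⟩ := ramsey2 (m + 1) (m + 1)
  obtain ⟨n₃, hn₃⟩ := exists_nat_ge (8 * R / ε + 3)
  refine ⟨R + n₃ + 2, fun n hn c hcol => ?_⟩
  have hnR : R ≤ n := by omega
  have hn2 : 2 ≤ n := by omega
  have hnn₃ : (n₃ : ℝ) ≤ n := by exact_mod_cast (by omega : n₃ ≤ n)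
  have hnRe : 8 * (R:ℝ) / ε + 3 ≤ n := le_trans hn₃ hnn₃
  have hnpos : (0:ℝ) < n := by exact_mod_cast (by omega : 0 < n)
  -- Case I construction
  have caseI : ∀ (j j' : Fin 2) (X Y : Finset (Fin n)), j ≠ j' →
      MonoClique c j X → MonoClique c j' Y → X.card = m + 1 → Y.card = m + 1 →
      ContainsUnavoidablePair t n c := by
    intro j j' X Y hjj' hXc hYc hXcard hYcard
    have hXYint : (X ∩ Y).card ≤ 1 := by
      by_contra hc
      push_neg at hc
      obtain ⟨x, hx, y, hy, hxy⟩ := Finset.one_lt_card.mp hc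
      have h1 : c s(x, y) = j :=
        hXc x (Finset.mem_of_mem_inter_left hx) y (Finset.mem_of_mem_inter_left hy) hxy
      have h2 : c s(x, y) = j' :=
        hYc x (Finset.mem_of_mem_inter_right hx) y (Finset.mem_of_mem_inter_right hy) hxy
      exact hjj' (h1 ▸ h2)
    have hXsd : m ≤ (X \ Y).card := by
      have := Finset.card_sdiff_add_card_inter X Y
      omega
    obtain ⟨A₀, hA₀sub, hA₀card⟩ := Finset.exists_subset_card_eq hXsd
    obtain ⟨B₀, hB₀sub, hB₀card⟩ := Finset.exists_subset_card_eq (show m ≤ Y.card by omega)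
    have hdisj : Disjoint A₀ B₀ := by
      rw [Finset.disjoint_left]
      intro a ha hb
      exact (Finset.mem_sdiff.mp (hA₀sub ha)).2 (hB₀sub hb)
    -- majority colour between A₀ and B₀
    have hsplit : ((A₀ ×ˢ B₀).filter fun p => c s(p.1, p.2) = 0).card
        + ((A₀ ×ˢ B₀).filter fun p => c s(p.1, p.2) = 1).card = m * m := by
      have h1 : ((A₀ ×ˢ B₀).filter fun p => c s(p.1, p.2) = 1)
          = ((A₀ ×ˢ B₀).filter fun p => ¬ c s(p.1, p.2) = 0) := by
        apply Finset.filter_congr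
        intro p _
        constructor
        · intro h; omega
        · intro h; omega
      rw [h1, Finset.card_filter_add_card_filter_not, Finset.card_product,
        hA₀card, hB₀card]
    have hmaj : ∃ k₃ : Fin 2,
        (1/2 : ℝ) * (m:ℝ)^2 ≤ (((A₀ ×ˢ B₀).filter fun p => c s(p.1, p.2) = k₃).card : ℝ) := by
      set f0 := ((A₀ ×ˢ B₀).filter fun p => c s(p.1, p.2) = 0).card
      set f1 := ((A₀ ×ˢ B₀).filter fun p => c s(p.1, p.2) = 1).card
      have hsum : (f0 : ℝ) + f1 = (m:ℝ)^2 := by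
        rw [pow_two]
        exact_mod_cast hsplit
      rcases le_total (f0:ℝ) f1 with h | h
      · exact ⟨1, by linarith⟩
      · exact ⟨0, by linarith⟩
    obtain ⟨k₃, hk₃⟩ := hmaj
    obtain ⟨A, B, hAsub, hBsub, hAcard, hBcard, hAB⟩ :=
      hmh n c k₃ A₀ B₀ m (le_max_left _ _) hA₀card hB₀card hk₃
    refine ⟨A, B, j, j', k₃, ?_, hAcard, hBcard, fun h => hjj' h.1, ?_, ?_, hAB⟩
    · exact Finset.disjoint_of_subset_left hAsub (Finset.disjoint_of_subset_right hBsub hdisj)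
    · intro a ha b hb hab
      exact hXc a ((Finset.sdiff_subset) (hA₀sub (hAsub ha)))
        b ((Finset.sdiff_subset) (hA₀sub (hAsub hb))) hab
    · intro a ha b hb hab
      exact hYc a (hB₀sub (hBsub ha)) b (hB₀sub (hBsub hb)) hab
  -- does colour j have a clique of size m+1?
  by_cases hbig : ∀ j : Fin 2, ∃ Z : Finset (Fin n), Z.card = m + 1 ∧ MonoClique c j Z
  · obtain ⟨Z0, hZ0card, hZ0⟩ := hbig 0
    obtain ⟨Z1, hZ1card, hZ1⟩ := hbig 1
    exact caseI 0 1 Z0 Z1 (by decide) hZ0 hZ1 hZ0card hZ1card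
  · -- some colour j has no clique of size m+1
    push_neg at hbig
    obtain ⟨j, hnoj⟩ := hbig
    set k : Fin 2 := j + 1 with hk
    have hkj : k ≠ j := by
      have hall : ∀ j : Fin 2, j + 1 ≠ j := by decide
      rw [hk]; exact hall j
    -- every large set contains a k-clique of size exactly m
    have hex : ∀ V : Finset (Fin n), R ≤ V.card → ∃ D ⊆ V, D.card = m ∧ MonoClique c k D := by
      intro V hV
      have hcol2 : ∀ i : Fin 2, i = j ∨ i = k := by
        have hall : ∀ (j i : Fin 2), i = j ∨ i = j + 1 := by decide
        rw [hk]; exact hall j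
      rcases hR n c V hV with ⟨M, hMV, hMcard, hMc⟩ | ⟨M, hMV, hMcard, hMc⟩
      · rcases hcol2 0 with h0 | h0
        · exact absurd (h0 ▸ hMc) (hnoj M hMcard)
        · obtain ⟨D, hDM, hDcard⟩ := Finset.exists_subset_card_eq
            (show m ≤ M.card by omega)
          exact ⟨D, (hDM.trans hMV), hDcard,
            fun x hx y hy hxy => h0 ▸ hMc x (hDM hx) y (hDM hy) hxy⟩
      · rcases hcol2 1 with h0 | h0
        · exact absurd (h0 ▸ hMc) (hnoj M hMcard)
        · obtain ⟨D, hDM, hDcard⟩ := Finset.exists_subset_card_eq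
            (show m ≤ M.card by omega)
          exact ⟨D, (hDM.trans hMV), hDcard,
            fun x hx y hy hxy => h0 ▸ hMc x (hDM hx) y (hDM hy) hxy⟩
    obtain ⟨q, D, hDV, hDcard, hDc, hDdisj, hL⟩ := packing c k m R hmpos hex Finset.univ
    set L : Finset (Fin n) := Finset.univ \ Finset.univ.biUnion D with hLdef
    by_contra hnopat
    -- all crossings have few j-coloured pairs
    have hcross : ∀ i i' : Fin q, i ≠ i' →
        (((D i ×ˢ D i').filter fun p => c s(p.1, p.2) = j).card : ℝ) < ε/4 * (m:ℝ)^2 := by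
      intro i i' hii'
      by_contra hc
      push_neg at hc
      obtain ⟨A, B, hAsub, hBsub, hAcard, hBcard, hAB⟩ :=
        hme n c j (D i) (D i') m (le_max_right _ _) (hDcard i) (hDcard i') hc
      apply hnopat
      refine ⟨A, B, k, k, j, ?_, hAcard, hBcard, fun h => hkj h.2, ?_, ?_, hAB⟩
      · exact Finset.disjoint_of_subset_left hAsub
          (Finset.disjoint_of_subset_right hBsub (hDdisj i i' hii'))
      · intro a ha b hb hab
        exact hDc i a (hAsub ha) b (hAsub hb) hab
      · intro a ha b hb hab
        exact hDc i' a (hBsub ha) b (hBsub hb) hab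
    -- count j-coloured ordered pairs
    set P : Finset (Fin n × Fin n) :=
      Finset.univ.filter (fun p => p.1 ≠ p.2 ∧ c s(p.1, p.2) = j) with hPdef
    set T : Finset (Fin n × Fin n) := (L ×ˢ Finset.univ) ∪ (Finset.univ ×ˢ L) with hTdef
    set U : Finset (Fin n × Fin n) :=
      (Finset.univ : Finset (Fin q)).offDiag.biUnion
        (fun ij => (D ij.1 ×ˢ D ij.2).filter fun p => c s(p.1, p.2) = j) with hUdef
    have hPsub : P ⊆ T ∪ U := by
      intro p hp
      rw [hPdef] at hp
      simp only [Finset.mem_filter, Finset.mem_univ, true_and] at hp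
      obtain ⟨hpne, hpcol⟩ := hp
      by_cases h1 : p.1 ∈ L
      · apply Finset.mem_union_left
        rw [hTdef]
        apply Finset.mem_union_left
        exact Finset.mem_product.mpr ⟨h1, Finset.mem_univ _⟩
      · by_cases h2 : p.2 ∈ L
        · apply Finset.mem_union_left
          rw [hTdef]
          apply Finset.mem_union_right
          exact Finset.mem_product.mpr ⟨Finset.mem_univ _, h2⟩
        · have e1 : ∃ i, p.1 ∈ D i := by
            by_contra hcon
            push_neg at hcon
            refine h1 ?_
            rw [hLdef]
            refine Finset.mem_sdiff.mpr ⟨Finset.mem_univ _, fun hmem => ?_⟩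
            obtain ⟨i, -, hi⟩ := Finset.mem_biUnion.mp hmem
            exact hcon i hi
          have e2 : ∃ i, p.2 ∈ D i := by
            by_contra hcon
            push_neg at hcon
            refine h2 ?_
            rw [hLdef]
            refine Finset.mem_sdiff.mpr ⟨Finset.mem_univ _, fun hmem => ?_⟩
            obtain ⟨i, -, hi⟩ := Finset.mem_biUnion.mp hmem
            exact hcon i hi
          obtain ⟨i, hi⟩ := e1
          obtain ⟨i', hi'⟩ := e2
          have hii' : i ≠ i' := by
            intro hEq
            subst hEq
            exact hkj ((hDc i p.1 hi p.2 hi' hpne).symm.trans hpcol)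
          apply Finset.mem_union_right
          rw [hUdef]
          apply Finset.mem_biUnion.mpr
          exact ⟨(i, i'), Finset.mem_offDiag.mpr ⟨Finset.mem_univ _, Finset.mem_univ _, hii'⟩,
            Finset.mem_filter.mpr ⟨Finset.mem_product.mpr ⟨hi, hi'⟩, hpcol⟩⟩
    -- cardinalities
    have hTcard : T.card ≤ 2 * L.card * n := by
      calc T.card ≤ (L ×ˢ (Finset.univ : Finset (Fin n))).card
          + ((Finset.univ : Finset (Fin n)) ×ˢ L).card := Finset.card_union_le _ _
      _ = L.card * n + n * L.card := by
          rw [Finset.card_product, Finset.card_product, Finset.card_univ, Fintype.card_fin]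
      _ = 2 * L.card * n := by ring
    have hqm : q * m ≤ n := by
      have hbU : (Finset.univ.biUnion D).card = q * m := by
        rw [Finset.card_biUnion (fun i _ i' _ hii' => hDdisj i i' hii')]
        rw [Finset.sum_congr rfl (fun i _ => hDcard i), Finset.sum_const, Finset.card_univ,
          Fintype.card_fin, smul_eq_mul]
      calc q * m = (Finset.univ.biUnion D).card := hbU.symm
      _ ≤ (Finset.univ : Finset (Fin n)).card := Finset.card_le_card (Finset.subset_univ _)
      _ = n := by rw [Finset.card_univ, Fintype.card_fin]
    have hUcard : (U.card : ℝ) ≤ (q:ℝ)^2 * (ε/4 * (m:ℝ)^2) := by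
      have h1 : (U.card : ℝ) ≤ ∑ ij ∈ (Finset.univ : Finset (Fin q)).offDiag,
          (((D ij.1 ×ˢ D ij.2).filter fun p => c s(p.1, p.2) = j).card : ℝ) := by
        have := Finset.card_biUnion_le (s := (Finset.univ : Finset (Fin q)).offDiag)
          (t := fun ij => (D ij.1 ×ˢ D ij.2).filter fun p => c s(p.1, p.2) = j)
        rw [hUdef]
        exact_mod_cast this
      have h2 : ∑ ij ∈ (Finset.univ : Finset (Fin q)).offDiag,
          (((D ij.1 ×ˢ D ij.2).filter fun p => c s(p.1, p.2) = j).card : ℝ)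
          ≤ ((Finset.univ : Finset (Fin q)).offDiag.card : ℝ) * (ε/4 * (m:ℝ)^2) := by
        rw [← nsmul_eq_mul]
        apply Finset.sum_le_card_nsmul
        intro ij hij
        have := Finset.mem_offDiag.mp hij
        exact le_of_lt (hcross ij.1 ij.2 this.2.2)
      have h3 : ((Finset.univ : Finset (Fin q)).offDiag.card : ℝ) ≤ (q:ℝ)^2 := by
        have : (Finset.univ : Finset (Fin q)).offDiag.card ≤ q * q := by
          rw [Finset.offDiag_card, Finset.card_univ, Fintype.card_fin]
          omega
        calc ((Finset.univ : Finset (Fin q)).offDiag.card : ℝ) ≤ ((q * q : ℕ) : ℝ) := by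
              exact_mod_cast this
        _ = (q:ℝ)^2 := by push_cast; ring
      have hnonneg : (0:ℝ) ≤ ε/4 * (m:ℝ)^2 := by positivity
      calc (U.card : ℝ) ≤ _ := h1
      _ ≤ _ := h2
      _ ≤ (q:ℝ)^2 * (ε/4 * (m:ℝ)^2) := by gcongr
    -- assemble the contradiction
    have hPcard : (P.card : ℝ) ≤ 2 * L.card * n + (q:ℝ)^2 * (ε/4 * (m:ℝ)^2) := by
      have h0 : P.card ≤ T.card + U.card := le_trans (Finset.card_le_card hPsub)
        (Finset.card_union_le _ _)
      have h0R : (P.card : ℝ) ≤ (T.card : ℝ) + (U.card : ℝ) := by exact_mod_cast h0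
      have hTR : (T.card : ℝ) ≤ 2 * L.card * n := by exact_mod_cast hTcard
      linarith
    have hncard : ε * (n.choose 2 : ℝ) ≤ (P.card : ℝ) := by
      refine le_trans (hcol j) ?_
      rw [hPdef]
      exact_mod_cast ncard_le_pairs c j
    have hchoose : ((n.choose 2 : ℕ) : ℝ) = (n:ℝ) * ((n:ℝ) - 1) / 2 := Nat.cast_choose_two ℝ n
    have hq2 : (q:ℝ)^2 * (m:ℝ)^2 ≤ (n:ℝ)^2 := by
      have hqmR : (q:ℝ) * m ≤ n := by exact_mod_cast hqm
      have h1 : (0:ℝ) ≤ (q:ℝ) * m := by positivity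
      nlinarith
    have hLR : (L.card : ℝ) ≤ (R:ℝ) - 1 := by
      have : L.card + 1 ≤ R := hL
      have := (Nat.cast_le (α := ℝ)).mpr this
      push_cast at this
      linarith
    have hU2 : (q:ℝ)^2 * (ε/4 * (m:ℝ)^2) ≤ ε/4 * (n:ℝ)^2 := by
      calc (q:ℝ)^2 * (ε/4 * (m:ℝ)^2) = ε/4 * ((q:ℝ)^2 * (m:ℝ)^2) := by ring
      _ ≤ ε/4 * (n:ℝ)^2 := by gcongr
    have hfinal : ε * ((n:ℝ) * ((n:ℝ) - 1) / 2) ≤ 2 * ((R:ℝ) - 1) * n + ε/4 * (n:ℝ)^2 := by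
      rw [hchoose] at hncard
      have h2 : 2 * (L.card:ℝ) * n ≤ 2 * ((R:ℝ)-1) * n := by
        have hnn : (0:ℝ) ≤ n := le_of_lt hnpos
        nlinarith
      linarith
    -- but n ≥ 8R/ε + 3 makes this impossible
    have hcontra : 2 * ((R:ℝ) - 1) * n + ε/4 * (n:ℝ)^2 < ε * ((n:ℝ) * ((n:ℝ) - 1) / 2) := by
      have key : 8 * (R:ℝ) ≤ ((n:ℝ) - 3) * ε := (div_le_iff₀ hε).mp (by linarith)
      have h8 : 8 * ((R:ℝ) - 1) < ε * ((n:ℝ) - 2) := by nlinarith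
      have h9 := mul_lt_mul_of_pos_right h8 (show (0:ℝ) < (n:ℝ)/4 by linarith)
      nlinarith [h9]
    linarith
end
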